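/- arXiv:2311.12765 — 6 statements merged into one kernel-verified Lean document; each statement's English description precedes it below -/
import Mathlib

section
/- If A is a good independent set in a 3-uniform hypergraph F and A' is a subset of A, then A' is also good. Here A ⊆ V(F) is 'good' if A is independent and for every set U with A ⊊ U ⊆ V(F), the deficiency Δ(U) := |U| - e(F[U]) satisfies Δ(U) ≥ |A| + 1. -/
/-- A 3-uniform hypergraph on vertex type `V`: a finite set of edges, each of size 3. -/
structure Hypergraph3 (V : Type*) where
  edges : Finset (Finset V)
  card3 : ∀ e ∈ edges, e.card = 3

variable {V : Type*} [DecidableEq V]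

/-- The edges of `F` contained in the vertex set `U`. -/
def edgesIn (F : Hypergraph3 V) (U : Finset V) : Finset (Finset V) :=
  F.edges.filter (fun e => e ⊆ U)

/-- The deficiency `Δ(U) = |U| - e(F[U])`. -/
def defic (F : Hypergraph3 V) (U : Finset V) : ℤ :=
  (U.card : ℤ) - ((edgesIn F U).card : ℤ)

/-- `A` is independent in `F` if no edge of `F` is contained in `A`. -/
def Indep (F : Hypergraph3 V) (A : Finset V) : Prop :=
  ∀ e ∈ F.edges, ¬ e ⊆ A

/-- `A` is good: independent, and every strict superset `U` has `Δ(U) ≥ |A| + 1`. -/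
def Good (F : Hypergraph3 V) (A : Finset V) : Prop :=
  Indep F A ∧ ∀ U : Finset V, A ⊂ U → (A.card : ℤ) + 1 ≤ defic F U

lemma edgesIn_mono (F : Hypergraph3 V) {U W : Finset V} (h : U ⊆ W) :
    edgesIn F U ⊆ edgesIn F W := by
  intro e he
  simp only [edgesIn, Finset.mem_filter] at he ⊢
  exact ⟨he.1, he.2.trans h⟩

/-- a subset of a good set is good. -/
theorem subset_of_good_is_good (F : Hypergraph3 V) (A A' : Finset V)
    (hA : Good F A) (hsub : A' ⊆ A) : Good F A' := by
  obtain ⟨hind, hgood⟩ := hA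
  refine ⟨fun e he hce => hind e he (hce.trans hsub), fun U hU => ?_⟩
  by_cases hUA : U ⊆ A
  · -- U independent, so defic F U = |U| ≥ |A'| + 1
    have hE : edgesIn F U = ∅ := by
      apply Finset.eq_empty_iff_forall_notMem.2
      intro e he
      simp only [edgesIn, Finset.mem_filter] at he
      exact hind e he.1 (he.2.trans hUA)
    have hcard : A'.card < U.card := Finset.card_lt_card hU
    simp only [defic, hE, Finset.card_empty]
    push_cast
    omega
  · set W := U ∪ A with hW
    have hAW : A ⊂ W := by
      constructor
      · exact Finset.subset_union_right
      · intro hWA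
        exact hUA (Finset.subset_union_left.trans hWA)
    have h1 : (A.card : ℤ) + 1 ≤ defic F W := hgood W hAW
    have h2 : (edgesIn F U).card ≤ (edgesIn F W).card :=
      Finset.card_le_card (edgesIn_mono F Finset.subset_union_left)
    have h3 : W.card ≤ U.card + (A \ A').card := by
      have : W ⊆ U ∪ (A \ A') := by
        intro x hx
        rcases Finset.mem_union.1 hx with h | h
        · exact Finset.mem_union_left _ h
        · by_cases hx' : x ∈ A'
          · exact Finset.mem_union_left _ (hU.1 hx')
          · exact Finset.mem_union_right _ (Finset.mem_sdiff.2 ⟨h, hx'⟩)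
      calc W.card ≤ (U ∪ (A \ A')).card := Finset.card_le_card this
        _ ≤ U.card + (A \ A').card := Finset.card_union_le _ _
    have h4 : (A \ A').card = A.card - A'.card := Finset.card_sdiff_of_subset hsub
    have h5 : A'.card ≤ A.card := Finset.card_le_card hsub
    simp only [defic] at h1 ⊢
    omega
end

section
/- Let F be a 3-uniform hypergraph, A ⊆ V(F) a good set, and U ⊆ V(F) a set not fully contained in A. Then Δ(U) ≥ |A ∩ U| + 1. -/
variable {V : Type*} [DecidableEq V]

/-- if `A` is good and `U` is not contained in `A`, then `Δ(U) ≥ |A ∩ U| + 1`. -/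
theorem defic_ge_of_good_of_not_subset (F : Hypergraph3 V) (A U : Finset V)
    (hA : Good F A) (hU : ¬ U ⊆ A) : ((A ∩ U).card : ℤ) + 1 ≤ defic F U := by
  have hsub : A ⊂ A ∪ U := by
    refine Finset.ssubset_iff_of_subset Finset.subset_union_left |>.mpr ?_
    obtain ⟨x, hxU, hxA⟩ := Finset.not_subset.mp hU
    exact ⟨x, Finset.mem_union_right _ hxU, hxA⟩
  have h1 := hA.2 (A ∪ U) hsub
  have hedge : edgesIn F U ⊆ edgesIn F (A ∪ U) := by
    intro e he
    simp only [edgesIn, Finset.mem_filter] at *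
    exact ⟨he.1, he.2.trans Finset.subset_union_right⟩
  have hcard : (edgesIn F U).card ≤ (edgesIn F (A ∪ U)).card :=
    Finset.card_le_card hedge
  have hunion : ((A ∪ U).card : ℤ) = (U.card : ℤ) + ((A \ U).card : ℤ) := by
    have := Finset.card_sdiff_add_card A U
    have h2 : (A ∪ U).card = U.card + (A \ U).card := by omega
    exact_mod_cast h2
  have hAsplit : (A.card : ℤ) = ((A ∩ U).card : ℤ) + ((A \ U).card : ℤ) := by
    exact_mod_cast congrArg Nat.cast (Finset.card_inter_add_card_sdiff A U).symm
  simp only [defic] at h1 ⊢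
  omega
end

section
/- Let F be an eligible 3-uniform hypergraph with Δ(F) = k, and let F' be obtained by gluing two disjoint copies of F along the good set A of size k−1. Then F' is eligible with Δ(F') = k+1 and e(F') = 2e(F). -/
variable {V : Type*} [DecidableEq V]

variable [Fintype V]

/-- The map identifying the first copy `V` inside `V ⊕ {x // x ∉ A}` along `A`. -/
def glueMap (A : Finset V) : V → V ⊕ {x : V // x ∉ A} :=
  fun v => if h : v ∈ A then Sum.inl v else Sum.inr ⟨v, h⟩

lemma glueMap_injective (A : Finset V) : Function.Injective (glueMap A) := by
  intro a b h
  have ha := congrArg (Sum.elim (id : V → V) Subtype.val) h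
  simp only [glueMap] at ha
  split_ifs at ha <;> simpa using ha

/-- The hypergraph obtained from two vertex-disjoint copies of `F` by identifying the
two copies of `A` pointwise. -/
def glue (F : Hypergraph3 V) (A : Finset V) : Hypergraph3 (V ⊕ {x : V // x ∉ A}) where
  edges := F.edges.image (Finset.image Sum.inl) ∪ F.edges.image (Finset.image (glueMap A))
  card3 := by
    intro e he
    simp only [Finset.mem_union, Finset.mem_image] at he
    rcases he with ⟨f, hf, rfl⟩ | ⟨f, hf, rfl⟩
    · rw [Finset.card_image_of_injective _ Sum.inl_injective]; exact F.card3 f hf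
    · rw [Finset.card_image_of_injective _ (glueMap_injective A)]; exact F.card3 f hf

/-- The degree of a vertex: the number of edges containing it. -/
def deg (F : Hypergraph3 V) (x : V) : ℕ :=
  (F.edges.filter (fun e => x ∈ e)).card

/-- `F` is eligible with data `A, B, u, v` and deficiency `k`:
(i) `A, B` are disjoint good sets of size `k - 1`;
(ii) `u ≠ v` are vertices outside `A ∪ B`;
(iii) at most `e(F)/4 - k` vertices have degree `> 1`, every edge contains at most one
vertex of degree `1`, and there are no isolated vertices;
(iv) every `U` with `|U| ≥ 2` has `Δ(U) ≥ 2`. -/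
def EligibleWith (F : Hypergraph3 V) (A B : Finset V) (u v : V) (k : ℕ) : Prop :=
  1 ≤ k ∧ defic F Finset.univ = (k : ℤ) ∧
  Good F A ∧ Good F B ∧ Disjoint A B ∧ A.card = k - 1 ∧ B.card = k - 1 ∧
  u ≠ v ∧ u ∉ A ∪ B ∧ v ∉ A ∪ B ∧
  (((Finset.univ.filter (fun x => 1 < deg F x)).card : ℚ) ≤ (F.edges.card : ℚ) / 4 - k) ∧
  (∀ e ∈ F.edges, (e.filter (fun x => deg F x = 1)).card ≤ 1) ∧
  (∀ x : V, 1 ≤ deg F x) ∧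
  (∀ U : Finset V, 2 ≤ U.card → 2 ≤ defic F U)

/-- `F` is eligible. -/
def Eligible (F : Hypergraph3 V) : Prop :=
  ∃ A B u v k, EligibleWith F A B u v k

section GlueAux
set_option linter.unusedSectionVars false

/-- The set of `V`-vertices whose first-copy image lies in `U'`. -/
def part1 (A : Finset V) (U' : Finset (V ⊕ {x : V // x ∉ A})) : Finset V :=
  Finset.univ.filter (fun x => Sum.inl x ∈ U')

/-- The set of `V`-vertices whose second-copy image lies in `U'`. -/
def part2 (A : Finset V) (U' : Finset (V ⊕ {x : V // x ∉ A})) : Finset V :=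
  Finset.univ.filter (fun x => glueMap A x ∈ U')

lemma mem_part1 {A : Finset V} {U' : Finset (V ⊕ {x : V // x ∉ A})} {x : V} :
    x ∈ part1 A U' ↔ Sum.inl x ∈ U' := by simp [part1]

lemma mem_part2 {A : Finset V} {U' : Finset (V ⊕ {x : V // x ∉ A})} {x : V} :
    x ∈ part2 A U' ↔ glueMap A x ∈ U' := by simp [part2]

lemma glueMap_of_mem {A : Finset V} {a : V} (ha : a ∈ A) : glueMap A a = Sum.inl a :=
  dif_pos ha

lemma glueMap_of_notMem {A : Finset V} {a : V} (ha : a ∉ A) :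
    glueMap A a = Sum.inr ⟨a, ha⟩ := dif_neg ha

lemma part_inter_eq {A : Finset V} (U' : Finset (V ⊕ {x : V // x ∉ A})) :
    part2 A U' ∩ A = part1 A U' ∩ A := by
  ext a
  simp only [Finset.mem_inter, mem_part1, mem_part2]
  constructor
  · rintro ⟨h1, h2⟩; rw [glueMap_of_mem h2] at h1; exact ⟨h1, h2⟩
  · rintro ⟨h1, h2⟩; rw [glueMap_of_mem h2]; exact ⟨h1, h2⟩

lemma part_card (A : Finset V) (U' : Finset (V ⊕ {x : V // x ∉ A})) :
    (U'.card : ℤ) = (part1 A U').card + (part2 A U').card - ((part1 A U') ∩ A).card := by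
  have h1 : U'.toLeft = part1 A U' := by
    ext x; simp [part1, Finset.mem_toLeft]
  have h2 : U'.toRight.image Subtype.val = part2 A U' \ A := by
    ext x
    simp only [Finset.mem_image, Finset.mem_sdiff, mem_part2, Finset.mem_toRight]
    constructor
    · rintro ⟨⟨y, hy⟩, hmem, rfl⟩; exact ⟨by rwa [glueMap_of_notMem hy], hy⟩
    · rintro ⟨hmem, hx⟩
      exact ⟨⟨x, hx⟩, by rwa [glueMap_of_notMem hx] at hmem, rfl⟩
  have h3 : U'.toLeft.card + U'.toRight.card = U'.card :=
    Finset.card_toLeft_add_card_toRight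
  have h4 : U'.toRight.card = (part2 A U' \ A).card := by
    rw [← h2, Finset.card_image_of_injective _ Subtype.val_injective]
  have h5 : (part2 A U' ∩ A).card + (part2 A U' \ A).card = (part2 A U').card :=
    Finset.card_inter_add_card_sdiff _ _
  rw [part_inter_eq] at h5
  rw [h1] at h3
  omega

lemma glue_images_disjoint (F : Hypergraph3 V) {A : Finset V} (hInd : Indep F A) :
    Disjoint (F.edges.image (Finset.image Sum.inl))
      (F.edges.image (Finset.image (glueMap A))) := by
  rw [Finset.disjoint_left]
  rintro e he1 he2
  obtain ⟨f, hf, rfl⟩ := Finset.mem_image.1 he1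
  obtain ⟨g, hg, hge⟩ := Finset.mem_image.1 he2
  obtain ⟨z, hz, hzA⟩ : ∃ z ∈ g, z ∉ A := by
    by_contra hc
    push_neg at hc
    exact hInd g hg (fun x hx => hc x hx)
  have hmem : glueMap A z ∈ f.image Sum.inl := hge ▸ Finset.mem_image_of_mem _ hz
  rw [glueMap_of_notMem hzA] at hmem
  simp at hmem

lemma glue_filter_card (F : Hypergraph3 V) {A : Finset V} (hInd : Indep F A)
    (p : Finset (V ⊕ {x : V // x ∉ A}) → Prop) [DecidablePred p] :
    ((glue F A).edges.filter p).card
      = (F.edges.filter (fun f => p (f.image Sum.inl))).card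
        + (F.edges.filter (fun f => p (f.image (glueMap A)))).card := by
  have hdisj : Disjoint ((F.edges.image (Finset.image Sum.inl)).filter p)
      ((F.edges.image (Finset.image (glueMap A))).filter p) :=
    Finset.disjoint_filter_filter (glue_images_disjoint F hInd)
  show ((F.edges.image (Finset.image Sum.inl)
      ∪ F.edges.image (Finset.image (glueMap A))).filter p).card = _
  rw [Finset.filter_union, Finset.card_union_of_disjoint hdisj,
    Finset.filter_image, Finset.filter_image,
    Finset.card_image_of_injective _ (Finset.image_injective Sum.inl_injective),
    Finset.card_image_of_injective _ (Finset.image_injective (glueMap_injective A))]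


end GlueAux

section GlueAux2
set_option linter.unusedSectionVars false

lemma defic_glue (F : Hypergraph3 V) {A : Finset V} (hInd : Indep F A)
    (U' : Finset (V ⊕ {x : V // x ∉ A})) :
    defic (glue F A) U'
      = defic F (part1 A U') + defic F (part2 A U') - ((part1 A U') ∩ A).card := by
  have e1 : F.edges.filter (fun f => f.image Sum.inl ⊆ U')
      = F.edges.filter (fun f => f ⊆ part1 A U') := by
    apply Finset.filter_congr
    intro f _
    simp [Finset.image_subset_iff, Finset.subset_iff, mem_part1]
  have e2 : F.edges.filter (fun f => f.image (glueMap A) ⊆ U')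
      = F.edges.filter (fun f => f ⊆ part2 A U') := by
    apply Finset.filter_congr
    intro f _
    simp [Finset.image_subset_iff, Finset.subset_iff, mem_part2]
  unfold defic edgesIn
  rw [glue_filter_card F hInd (fun e => e ⊆ U'), e1, e2, part_card A U']
  push_cast
  ring

lemma deg_glue_inl (F : Hypergraph3 V) {A : Finset V} (hInd : Indep F A) (x : V) :
    deg (glue F A) (Sum.inl x) = deg F x + (if x ∈ A then deg F x else 0) := by
  unfold deg
  rw [glue_filter_card F hInd (fun e => Sum.inl x ∈ e)]
  congr 1
  · apply congrArg
    apply Finset.filter_congr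
    intro f _
    simp
  · by_cases hx : x ∈ A
    · simp only [if_pos hx]
      apply congrArg
      apply Finset.filter_congr
      intro f _
      simp only [Finset.mem_image]
      constructor
      · rintro ⟨z, hz, hzx⟩
        by_cases hzA : z ∈ A
        · rw [glueMap_of_mem hzA] at hzx
          rcases Sum.inl.inj hzx with rfl
          exact hz
        · rw [glueMap_of_notMem hzA] at hzx
          exact absurd hzx (by simp)
      · intro hxf
        exact ⟨x, hxf, glueMap_of_mem hx⟩
    · simp only [if_neg hx]
      rw [Finset.card_eq_zero]
      rw [Finset.filter_eq_empty_iff]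
      intro f _
      simp only [Finset.mem_image]
      rintro ⟨z, hz, hzx⟩
      by_cases hzA : z ∈ A
      · rw [glueMap_of_mem hzA] at hzx
        rcases Sum.inl.inj hzx with rfl
        exact hx hzA
      · rw [glueMap_of_notMem hzA] at hzx
        exact absurd hzx (by simp)

lemma deg_glue_inr (F : Hypergraph3 V) {A : Finset V} (hInd : Indep F A)
    (y : {x : V // x ∉ A}) :
    deg (glue F A) (Sum.inr y) = deg F y.val := by
  unfold deg
  rw [glue_filter_card F hInd (fun e => Sum.inr y ∈ e)]
  have h1 : F.edges.filter (fun f => Sum.inr y ∈ f.image Sum.inl) = ∅ := by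
    rw [Finset.filter_eq_empty_iff]
    intro f _
    simp
  have h2 : F.edges.filter (fun f => Sum.inr y ∈ f.image (glueMap A))
      = F.edges.filter (fun f => y.val ∈ f) := by
    apply Finset.filter_congr
    intro f _
    simp only [Finset.mem_image]
    constructor
    · rintro ⟨z, hz, hzy⟩
      by_cases hzA : z ∈ A
      · rw [glueMap_of_mem hzA] at hzy; exact absurd hzy (by simp)
      · rw [glueMap_of_notMem hzA] at hzy
        rcases Sum.inr.inj hzy with h
        have : z = y.val := congrArg Subtype.val h
        rwa [← this]
    · intro hyf
      exact ⟨y.val, hyf, by rw [glueMap_of_notMem y.2]⟩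
  rw [h1, h2]
  simp

/-- On a subset of an independent set, the deficiency is the cardinality. -/
lemma defic_of_indep (F : Hypergraph3 V) {A U : Finset V} (hInd : Indep F A)
    (hU : U ⊆ A) : defic F U = U.card := by
  have : edgesIn F U = ∅ := by
    rw [edgesIn, Finset.filter_eq_empty_iff]
    intro e he hsub
    exact hInd e he (hsub.trans hU)
  rw [defic, this]
  simp

/-- Key consequence of goodness: any `U` reaching outside `A` has `Δ(U) ≥ |U ∩ A| + 1`. -/
lemma defic_ge_of_good (F : Hypergraph3 V) {A : Finset V} (hA : Good F A)
    {U : Finset V} (hU : (U \ A).Nonempty) :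
    ((U ∩ A).card : ℤ) + 1 ≤ defic F U := by
  obtain ⟨x, hx⟩ := hU
  rw [Finset.mem_sdiff] at hx
  have hss : A ⊂ U ∪ A := by
    refine Finset.ssubset_iff_of_subset Finset.subset_union_right |>.2 ?_
    exact ⟨x, Finset.mem_union_left _ hx.1, hx.2⟩
  have h2 := hA.2 (U ∪ A) hss
  have hmono : (edgesIn F U).card ≤ (edgesIn F (U ∪ A)).card := by
    apply Finset.card_le_card
    unfold edgesIn
    intro e he
    rw [Finset.mem_filter] at he ⊢
    exact ⟨he.1, he.2.trans Finset.subset_union_left⟩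
  have hcard : (U ∪ A).card + (U ∩ A).card = U.card + A.card :=
    Finset.card_union_add_card_inter U A
  rw [defic] at h2 ⊢
  have hc : ((U ∪ A).card : ℤ) = (U.card : ℤ) + A.card - (U ∩ A).card := by
    have : ((U ∪ A).card : ℤ) + (U ∩ A).card = (U.card : ℤ) + A.card := by
      exact_mod_cast congrArg (Nat.cast : ℕ → ℤ) hcard
    linarith
  rw [hc] at h2
  have : ((edgesIn F U).card : ℤ) ≤ (edgesIn F (U ∪ A)).card := by exact_mod_cast hmono
  linarith

/-- Weak form: `Δ(U) ≥ |U ∩ A|` for every `U`. -/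
lemma defic_ge_inter (F : Hypergraph3 V) {A : Finset V} (hA : Good F A)
    (U : Finset V) : ((U ∩ A).card : ℤ) ≤ defic F U := by
  rcases (U \ A).eq_empty_or_nonempty with hempty | hne
  · have hsub : U ⊆ A := by
      intro x hx
      by_contra hxA
      exact absurd (Finset.mem_sdiff.2 ⟨hx, hxA⟩) (by simp [hempty])
    rw [defic_of_indep F hA.1 hsub, Finset.inter_eq_left.2 hsub]
  · linarith [defic_ge_of_good F hA hne]

end GlueAux2

/-- gluing two disjoint copies of an eligible hypergraph `F` with `Δ(F) = k`
along its good set `A` of size `k - 1` yields an eligible hypergraph `F'` with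
`Δ(F') = k + 1` and `e(F') = 2e(F)`. -/
theorem glue_eligible (F : Hypergraph3 V) (A B : Finset V) (u v : V) (k : ℕ)
    (h : EligibleWith F A B u v k) :
    Eligible (glue F A) ∧ defic (glue F A) Finset.univ = (k : ℤ) + 1 ∧
    (glue F A).edges.card = 2 * F.edges.card := by
  obtain ⟨hk, hdef, hA, hB, hAB, hAcard, hBcard, huv, huAB, hvAB, hcount, hedge1,
    hdegpos, hiv⟩ := h
  have hInd := hA.1
  have huA : u ∉ A := fun hc => huAB (Finset.mem_union_left _ hc)
  have huB : u ∉ B := fun hc => huAB (Finset.mem_union_right _ hc)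
  have hvA : v ∉ A := fun hc => hvAB (Finset.mem_union_left _ hc)
  have hvB : v ∉ B := fun hc => hvAB (Finset.mem_union_right _ hc)
  have hBA : ∀ b ∈ B, b ∉ A := fun b hb hc => (Finset.disjoint_left.1 hAB) hc hb
  have hAcardZ : (A.card : ℤ) = (k : ℤ) - 1 := by
    rw [hAcard, Nat.cast_sub hk, Nat.cast_one]
  have hBcardZ : (B.card : ℤ) = (k : ℤ) - 1 := by
    rw [hBcard, Nat.cast_sub hk, Nat.cast_one]
  -- edge count
  have hEcard : (glue F A).edges.card = 2 * F.edges.card := by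
    have h0 := glue_filter_card F hInd (fun _ => True)
    simp only [Finset.filter_true] at h0
    omega
  -- total deficiency
  have hp1univ : part1 A (Finset.univ : Finset (V ⊕ {x : V // x ∉ A})) = Finset.univ := by
    ext x; simp [part1]
  have hp2univ : part2 A (Finset.univ : Finset (V ⊕ {x : V // x ∉ A})) = Finset.univ := by
    ext x; simp [part2]
  have hdef' : defic (glue F A) Finset.univ = (k : ℤ) + 1 := by
    rw [defic_glue F hInd, hp1univ, hp2univ, Finset.univ_inter, hdef, hAcardZ]
    ring
  refine ⟨?_, hdef', hEcard⟩
  -- the new good sets and special vertices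
  set uS : {x : V // x ∉ A} := ⟨u, huA⟩ with huS
  set vS : {x : V // x ∉ A} := ⟨v, hvA⟩ with hvS
  set A' : Finset (V ⊕ {x : V // x ∉ A}) := B.image Sum.inl ∪ {Sum.inr uS} with hA'def
  set B' : Finset (V ⊕ {x : V // x ∉ A}) := B.image (glueMap A) ∪ {Sum.inl u} with hB'def
  have hA'card : A'.card = k := by
    rw [hA'def, Finset.card_union_of_disjoint (by simp [Finset.disjoint_left]),
      Finset.card_image_of_injective _ Sum.inl_injective, Finset.card_singleton, hBcard]
    omega
  have hB'card : B'.card = k := by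
    have hd : Disjoint (B.image (glueMap A)) ({Sum.inl u} : Finset _) := by
      rw [Finset.disjoint_left]
      rintro w hw hw2
      obtain ⟨c, hc, rfl⟩ := Finset.mem_image.1 hw
      rw [glueMap_of_notMem (hBA c hc)] at hw2
      simp at hw2
    rw [hB'def, Finset.card_union_of_disjoint hd,
      Finset.card_image_of_injective _ (glueMap_injective A), Finset.card_singleton, hBcard]
    omega
  -- goodness of A'
  have hGoodA' : Good (glue F A) A' := by
    constructor
    · intro e he hsub
      simp only [glue, Finset.mem_union, Finset.mem_image] at he
      rcases he with ⟨f, hf, rfl⟩ | ⟨f, hf, rfl⟩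
      · apply hB.1 f hf
        intro x hx
        have hx' : Sum.inl x ∈ A' := hsub (Finset.mem_image_of_mem _ hx)
        rw [hA'def] at hx'
        simp only [Finset.mem_union, Finset.mem_image, Finset.mem_singleton] at hx'
        rcases hx' with ⟨b, hb, hbe⟩ | habs
        · rcases Sum.inl.inj hbe with rfl; exact hb
        · exact absurd habs (by simp)
      · have hsub' : f ⊆ {u} := by
          intro x hx
          have hx' : glueMap A x ∈ A' := hsub (Finset.mem_image_of_mem _ hx)
          rw [hA'def] at hx'
          simp only [Finset.mem_union, Finset.mem_image, Finset.mem_singleton] at hx'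
          by_cases hxA : x ∈ A
          · rw [glueMap_of_mem hxA] at hx'
            rcases hx' with ⟨b, hb, hbe⟩ | habs
            · rcases Sum.inl.inj hbe with rfl; exact absurd hxA (hBA _ hb)
            · exact absurd habs (by simp)
          · rw [glueMap_of_notMem hxA] at hx'
            rcases hx' with ⟨b, hb, hbe⟩ | heq
            · exact absurd hbe (by simp)
            · have : x = u := congrArg Subtype.val (Sum.inr.inj heq)
              simp [this]
        have h3 := F.card3 f hf
        have hle := Finset.card_le_card hsub'
        rw [Finset.card_singleton] at hle
        omega
    · intro U' hU'
      rw [hA'card, defic_glue F hInd]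
      have hBsub : B ⊆ part1 A U' := by
        intro b hb
        rw [mem_part1]
        exact hU'.1 (by rw [hA'def]; exact Finset.mem_union_left _ (Finset.mem_image_of_mem _ hb))
      have huU2 : u ∈ part2 A U' := by
        rw [mem_part2, glueMap_of_notMem huA]
        exact hU'.1 (by rw [hA'def]; exact Finset.mem_union_right _ (Finset.mem_singleton_self _))
      by_cases hU1 : part1 A U' = B
      · have hIA : part1 A U' ∩ A = ∅ := by
          rw [hU1]
          exact Finset.disjoint_iff_inter_eq_empty.1 hAB.symm
        obtain ⟨w', hw'U, hw'A⟩ := Finset.exists_of_ssubset hU'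
        obtain x | y := w'
        · exfalso
          have hx1 : x ∈ part1 A U' := mem_part1.2 hw'U
          rw [hU1] at hx1
          exact hw'A (by rw [hA'def]; exact Finset.mem_union_left _ (Finset.mem_image_of_mem _ hx1))
        · have hyU2 : y.val ∈ part2 A U' := by
            rw [mem_part2, glueMap_of_notMem y.2]
            simpa using hw'U
          have hyu : y.val ≠ u := by
            intro hc
            apply hw'A
            rw [hA'def]
            have : y = uS := Subtype.ext (by rw [hc, huS])
            rw [this]
            exact Finset.mem_union_right _ (Finset.mem_singleton_self _)
          have hpair : ({u, y.val} : Finset V) ⊆ part2 A U' := by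
            intro z hz
            rcases Finset.mem_insert.1 hz with rfl | hz'
            · exact huU2
            · rw [Finset.mem_singleton.1 hz']; exact hyU2
          have h2card : 2 ≤ (part2 A U').card := by
            have : ({u, y.val} : Finset V).card = 2 := by
              rw [Finset.card_insert_of_notMem (by simp [Ne.symm hyu]), Finset.card_singleton]
            rw [← this]
            exact Finset.card_le_card hpair
          have hd2 := hiv _ h2card
          have hd1 : defic F (part1 A U') = B.card := by
            rw [hU1]; exact defic_of_indep F hB.1 (le_refl B)
          rw [hIA, hd1]
          simp only [Finset.card_empty]
          push_cast
          linarith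
      · have hss : B ⊂ part1 A U' := Finset.ssubset_iff_subset_ne.2 ⟨hBsub, fun hc => hU1 hc.symm⟩
        have h1 := hB.2 _ hss
        have h2 : ((part2 A U' ∩ A).card : ℤ) + 1 ≤ defic F (part2 A U') :=
          defic_ge_of_good F hA ⟨u, Finset.mem_sdiff.2 ⟨huU2, huA⟩⟩
        rw [part_inter_eq] at h2
        linarith
  -- goodness of B'
  have hGoodB' : Good (glue F A) B' := by
    constructor
    · intro e he hsub
      simp only [glue, Finset.mem_union, Finset.mem_image] at he
      rcases he with ⟨f, hf, rfl⟩ | ⟨f, hf, rfl⟩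
      · have hsub' : f ⊆ {u} := by
          intro x hx
          have hx' : Sum.inl x ∈ B' := hsub (Finset.mem_image_of_mem _ hx)
          rw [hB'def] at hx'
          simp only [Finset.mem_union, Finset.mem_image, Finset.mem_singleton] at hx'
          rcases hx' with ⟨b, hb, hbe⟩ | heq
          · rw [glueMap_of_notMem (hBA b hb)] at hbe
            exact absurd hbe (by simp)
          · rcases Sum.inl.inj heq with rfl; simp
        have h3 := F.card3 f hf
        have hle := Finset.card_le_card hsub'
        rw [Finset.card_singleton] at hle
        omega
      · apply hB.1 f hf
        intro x hx
        have hx' : glueMap A x ∈ B' := hsub (Finset.mem_image_of_mem _ hx)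
        rw [hB'def] at hx'
        simp only [Finset.mem_union, Finset.mem_image, Finset.mem_singleton] at hx'
        by_cases hxA : x ∈ A
        · rw [glueMap_of_mem hxA] at hx'
          rcases hx' with ⟨b, hb, hbe⟩ | heq
          · rw [glueMap_of_notMem (hBA b hb)] at hbe
            exact absurd hbe (by simp)
          · rcases Sum.inl.inj heq with rfl; exact absurd hxA huA
        · rw [glueMap_of_notMem hxA] at hx'
          rcases hx' with ⟨b, hb, hbe⟩ | heq
          · rw [glueMap_of_notMem (hBA b hb)] at hbe
            have : b = x := congrArg Subtype.val (Sum.inr.inj hbe)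
            subst this
            exact hb
          · exact absurd heq (by simp)
    · intro U' hU'
      rw [hB'card, defic_glue F hInd]
      have hBsub2 : B ⊆ part2 A U' := by
        intro b hb
        rw [mem_part2]
        exact hU'.1 (by rw [hB'def]; exact Finset.mem_union_left _ (Finset.mem_image_of_mem _ hb))
      have huU1 : u ∈ part1 A U' := by
        rw [mem_part1]
        exact hU'.1 (by rw [hB'def]; exact Finset.mem_union_right _ (Finset.mem_singleton_self _))
      by_cases hU2 : part2 A U' = B
      · have hIA2 : part2 A U' ∩ A = ∅ := by
          rw [hU2]
          exact Finset.disjoint_iff_inter_eq_empty.1 hAB.symm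
        have hIA1 : part1 A U' ∩ A = ∅ := by rw [← part_inter_eq]; exact hIA2
        obtain ⟨w', hw'U, hw'B⟩ := Finset.exists_of_ssubset hU'
        obtain x | y := w'
        · have hxU1 : x ∈ part1 A U' := mem_part1.2 hw'U
          have hxu : x ≠ u := by
            intro hc
            apply hw'B
            rw [hB'def, hc]
            exact Finset.mem_union_right _ (Finset.mem_singleton_self _)
          have hpair : ({u, x} : Finset V) ⊆ part1 A U' := by
            intro z hz
            rcases Finset.mem_insert.1 hz with rfl | hz'
            · exact huU1
            · rw [Finset.mem_singleton.1 hz']; exact hxU1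
          have h1card : 2 ≤ (part1 A U').card := by
            have : ({u, x} : Finset V).card = 2 := by
              rw [Finset.card_insert_of_notMem (by simp [Ne.symm hxu]), Finset.card_singleton]
            rw [← this]
            exact Finset.card_le_card hpair
          have hd1 := hiv _ h1card
          have hd2 : defic F (part2 A U') = B.card := by
            rw [hU2]; exact defic_of_indep F hB.1 (le_refl B)
          rw [hIA1, hd2]
          simp only [Finset.card_empty]
          push_cast
          linarith
        · exfalso
          have hyU2 : y.val ∈ part2 A U' := by
            rw [mem_part2, glueMap_of_notMem y.2]
            simpa using hw'U
          rw [hU2] at hyU2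
          apply hw'B
          rw [hB'def]
          apply Finset.mem_union_left
          have hgy : glueMap A y.val = Sum.inr y := by rw [glueMap_of_notMem y.2]
          exact hgy ▸ Finset.mem_image_of_mem _ hyU2
      · have hss2 : B ⊂ part2 A U' := Finset.ssubset_iff_subset_ne.2 ⟨hBsub2, fun hc => hU2 hc.symm⟩
        have h1 := hB.2 _ hss2
        have h2 : ((part1 A U' ∩ A).card : ℤ) + 1 ≤ defic F (part1 A U') :=
          defic_ge_of_good F hA ⟨u, Finset.mem_sdiff.2 ⟨huU1, huA⟩⟩
        linarith
  -- disjointness of A' and B'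
  have hdisjA'B' : Disjoint A' B' := by
    rw [Finset.disjoint_left]
    intro w hwA hwB
    rw [hA'def] at hwA
    rw [hB'def] at hwB
    simp only [Finset.mem_union, Finset.mem_image, Finset.mem_singleton] at hwA hwB
    rcases hwA with ⟨b, hb, rfl⟩ | rfl
    · rcases hwB with ⟨c, hc, hce⟩ | heq
      · rw [glueMap_of_notMem (hBA c hc)] at hce
        exact absurd hce (by simp)
      · rcases Sum.inl.inj heq with rfl; exact huB hb
    · rcases hwB with ⟨c, hc, hce⟩ | heq
      · rw [glueMap_of_notMem (hBA c hc)] at hce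
        have : c = u := congrArg Subtype.val (Sum.inr.inj hce)
        subst this
        exact huB hc
      · exact absurd heq (by simp)
  -- the two special vertices of the glued graph
  have hvInlA' : Sum.inl v ∉ A' ∪ B' := by
    rw [hA'def, hB'def]
    simp only [Finset.mem_union, Finset.mem_image, Finset.mem_singleton]
    push_neg
    refine ⟨⟨fun b hb hbe => ?_, by simp⟩, fun c hc hce => ?_, by simp [huv.symm]⟩
    · rcases Sum.inl.inj hbe with rfl; exact hvB hb
    · rw [glueMap_of_notMem (hBA c hc)] at hce
      exact absurd hce (by simp)
  have hvInrA' : Sum.inr vS ∉ A' ∪ B' := by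
    rw [hA'def, hB'def]
    simp only [Finset.mem_union, Finset.mem_image, Finset.mem_singleton]
    push_neg
    refine ⟨⟨fun b hb hbe => ?_, ?_⟩, fun c hc hce => ?_, by simp⟩
    · exact absurd hbe (by simp)
    · intro hc
      have : v = u := congrArg Subtype.val (Sum.inr.inj hc)
      exact huv this.symm
    · rw [glueMap_of_notMem (hBA c hc)] at hce
      have : c = v := congrArg Subtype.val (Sum.inr.inj hce)
      subst this
      exact hvB hc
  -- degree conditions
  have hdegpos' : ∀ w : V ⊕ {x : V // x ∉ A}, 1 ≤ deg (glue F A) w := by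
    rintro (x | y)
    · rw [deg_glue_inl F hInd]
      have := hdegpos x
      by_cases hxA : x ∈ A <;> simp [hxA] <;> omega
    · rw [deg_glue_inr F hInd]
      exact hdegpos y.val
  have hcount' : (((Finset.univ : Finset (V ⊕ {x : V // x ∉ A})).filter
        (fun w => 1 < deg (glue F A) w)).card : ℚ)
      ≤ ((glue F A).edges.card : ℚ) / 4 - ((k : ℚ) + 1) := by
    set D' := (Finset.univ : Finset (V ⊕ {x : V // x ∉ A})).filter
      (fun w => 1 < deg (glue F A) w) with hD'
    set D := Finset.univ.filter (fun x => 1 < deg F x) with hD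
    have hsplit : D'.toLeft.card + D'.toRight.card = D'.card :=
      Finset.card_toLeft_add_card_toRight
    have hL : D'.toLeft ⊆ A ∪ D := by
      intro x hx
      rw [Finset.mem_toLeft, hD', Finset.mem_filter] at hx
      have hd := hx.2
      rw [deg_glue_inl F hInd] at hd
      by_cases hxA : x ∈ A
      · exact Finset.mem_union_left _ hxA
      · rw [if_neg hxA, Nat.add_zero] at hd
        exact Finset.mem_union_right _ (Finset.mem_filter.2 ⟨Finset.mem_univ _, hd⟩)
    have hLcard : D'.toLeft.card ≤ A.card + D.card :=
      (Finset.card_le_card hL).trans (Finset.card_union_le _ _)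
    have hRcard : D'.toRight.card ≤ D.card := by
      rw [← Finset.card_image_of_injective D'.toRight Subtype.val_injective]
      apply Finset.card_le_card
      intro x hx
      obtain ⟨y, hy, rfl⟩ := Finset.mem_image.1 hx
      rw [Finset.mem_toRight, hD', Finset.mem_filter] at hy
      have hd := hy.2
      rw [deg_glue_inr F hInd] at hd
      exact Finset.mem_filter.2 ⟨Finset.mem_univ _, hd⟩
    have hN : D'.card ≤ A.card + 2 * D.card := by omega
    have hNq : (D'.card : ℚ) ≤ (A.card : ℚ) + 2 * D.card := by exact_mod_cast hN
    have hAq : (A.card : ℚ) = (k : ℚ) - 1 := by rw [hAcard, Nat.cast_sub hk, Nat.cast_one]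
    rw [hEcard]
    push_cast
    rw [hAq] at hNq
    linarith [hcount]
  have hedge1' : ∀ e ∈ (glue F A).edges,
      (e.filter (fun w => deg (glue F A) w = 1)).card ≤ 1 := by
    intro e he
    simp only [glue, Finset.mem_union, Finset.mem_image] at he
    rcases he with ⟨f, hf, rfl⟩ | ⟨f, hf, rfl⟩
    · calc ((f.image Sum.inl).filter (fun w => deg (glue F A) w = 1)).card
          = ((f.filter (fun x => deg (glue F A) (Sum.inl x) = 1)).image Sum.inl).card := by
            rw [Finset.filter_image]
        _ ≤ (f.filter (fun x => deg (glue F A) (Sum.inl x) = 1)).card := Finset.card_image_le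
        _ ≤ (f.filter (fun x => deg F x = 1)).card := by
            apply Finset.card_le_card
            intro x hx
            rw [Finset.mem_filter] at hx ⊢
            refine ⟨hx.1, ?_⟩
            have hxd := hx.2
            rw [deg_glue_inl F hInd] at hxd
            have := hdegpos x
            by_cases hxA : x ∈ A
            · rw [if_pos hxA] at hxd; omega
            · rw [if_neg hxA] at hxd; omega
        _ ≤ 1 := hedge1 f hf
    · calc ((f.image (glueMap A)).filter (fun w => deg (glue F A) w = 1)).card
          = ((f.filter (fun x => deg (glue F A) (glueMap A x) = 1)).image (glueMap A)).card := by
            rw [Finset.filter_image]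
        _ ≤ (f.filter (fun x => deg (glue F A) (glueMap A x) = 1)).card := Finset.card_image_le
        _ ≤ (f.filter (fun x => deg F x = 1)).card := by
            apply Finset.card_le_card
            intro x hx
            rw [Finset.mem_filter] at hx ⊢
            refine ⟨hx.1, ?_⟩
            have hxd := hx.2
            have := hdegpos x
            by_cases hxA : x ∈ A
            · rw [glueMap_of_mem hxA, deg_glue_inl F hInd, if_pos hxA] at hxd
              omega
            · rwa [glueMap_of_notMem hxA, deg_glue_inr F hInd] at hxd
        _ ≤ 1 := hedge1 f hf
  -- condition (iv) for the glued graph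
  have hiv' : ∀ U' : Finset (V ⊕ {x : V // x ∉ A}), 2 ≤ U'.card →
      2 ≤ defic (glue F A) U' := by
    intro U' hU'c
    rw [defic_glue F hInd]
    have hcardU := part_card A U'
    rcases (part1 A U' \ A).eq_empty_or_nonempty with h1 | h1
    · have hsub1 : part1 A U' ⊆ A := Finset.sdiff_eq_empty_iff_subset.1 h1
      have hint : part1 A U' ∩ A = part1 A U' := Finset.inter_eq_left.2 hsub1
      have hd1 : defic F (part1 A U') = (part1 A U').card := defic_of_indep F hInd hsub1
      have hc2 : 2 ≤ (part2 A U').card := by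
        rw [hint] at hcardU
        have : (U'.card : ℤ) = ((part2 A U').card : ℤ) := by linarith
        have h2 : U'.card = (part2 A U').card := by exact_mod_cast this
        omega
      have hd2 := hiv _ hc2
      rw [hd1, hint]
      linarith
    · rcases (part2 A U' \ A).eq_empty_or_nonempty with h2 | h2
      · have hsub2 : part2 A U' ⊆ A := Finset.sdiff_eq_empty_iff_subset.1 h2
        have hint2 : part2 A U' ∩ A = part2 A U' := Finset.inter_eq_left.2 hsub2
        have hint1 : part1 A U' ∩ A = part2 A U' := by rw [← part_inter_eq, hint2]
        have hd2 : defic F (part2 A U') = (part2 A U').card := defic_of_indep F hInd hsub2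
        have hc1 : 2 ≤ (part1 A U').card := by
          rw [hint1] at hcardU
          have : (U'.card : ℤ) = ((part1 A U').card : ℤ) := by linarith
          have h2' : U'.card = (part1 A U').card := by exact_mod_cast this
          omega
        have hd1 := hiv _ hc1
        rw [hd2, hint1]
        linarith
      · have g1 := defic_ge_of_good F hA h1
        have g2 := defic_ge_of_good F hA h2
        rw [part_inter_eq] at g2
        have hnn : (0 : ℤ) ≤ ((part1 A U' ∩ A).card : ℤ) := Int.natCast_nonneg _
        linarith
  -- assemble eligibility
  refine ⟨A', B', Sum.inl v, Sum.inr vS, k + 1, by omega, ?_, hGoodA', hGoodB',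
    hdisjA'B', by omega, by omega, by simp, hvInlA', hvInrA', ?_, hedge1', hdegpos', hiv'⟩
  · rw [hdef']; push_cast; ring
  · have h2 := hcount'
    push_cast at h2 ⊢
    linarith
end

section
/- Let F₁ and F₂ be eligible 3-uniform hypergraphs (copies of F), glued along the common good set A to form F'. For any U' ⊆ V(F') with |U'| ≥ 2, writing U⁽¹⁾ = U' ∩ V(F₁) and U⁽²⁾ = U' ∩ V(F₂), one has Δ_{F'}(U') = Δ_{F₁}(U⁽¹⁾) + Δ_{F₂}(U⁽²⁾) − |A ∩ U'|, and consequently Δ_{F'}(U') ≥ 2. -/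
variable {V : Type*} [DecidableEq V]

variable [Fintype V]

section Aux

variable {V : Type*} [DecidableEq V] [Fintype V]

lemma edgesIn_card_mono (F : Hypergraph3 V) {U W : Finset V} (h : U ⊆ W) :
    (edgesIn F U).card ≤ (edgesIn F W).card :=
  Finset.card_le_card (Finset.monotone_filter_right _ (fun _ _ he => he.trans h))

lemma edgesIn_empty_of_indep (F : Hypergraph3 V) {A U : Finset V} (hI : Indep F A)
    (hU : U ⊆ A) : edgesIn F U = ∅ := by
  ext e
  simp only [edgesIn, Finset.mem_filter, Finset.notMem_empty, iff_false, not_and]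
  exact fun he hsub => hI e he (hsub.trans hU)

lemma good_bound (F : Hypergraph3 V) {A : Finset V} (hG : Good F A) {U : Finset V}
    (hU : ¬ U ⊆ A) : ((A ∩ U).card : ℤ) + 1 ≤ defic F U := by
  obtain ⟨x, hxU, hxA⟩ := Finset.not_subset.1 hU
  have hss : A ⊂ U ∪ A :=
    ⟨Finset.subset_union_right, fun hsub => hxA (hsub (Finset.mem_union_left _ hxU))⟩
  have h1 := hG.2 _ hss
  have h2 : (edgesIn F U).card ≤ (edgesIn F (U ∪ A)).card :=
    edgesIn_card_mono F Finset.subset_union_left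
  have h3 : (A \ U).card + U.card = (A ∪ U).card := Finset.card_sdiff_add_card A U
  have h4 : (A ∩ U).card + (A \ U).card = A.card := Finset.card_inter_add_card_sdiff A U
  rw [Finset.union_comm] at h3
  simp only [defic] at h1 ⊢
  have h3' : ((A \ U).card : ℤ) + (U.card : ℤ) = ((U ∪ A).card : ℤ) := by exact_mod_cast h3
  have h4' : ((A ∩ U).card : ℤ) + ((A \ U).card : ℤ) = (A.card : ℤ) := by exact_mod_cast h4
  have h2' : ((edgesIn F U).card : ℤ) ≤ ((edgesIn F (U ∪ A)).card : ℤ) := by exact_mod_cast h2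
  linarith

lemma glue_edgesIn_card (F : Hypergraph3 V) {A : Finset V} (hI : Indep F A)
    (U' : Finset (V ⊕ {x : V // x ∉ A})) :
    (edgesIn (glue F A) U').card =
      (edgesIn F (Finset.univ.filter (fun x => Sum.inl x ∈ U'))).card +
      (edgesIn F (Finset.univ.filter (fun x => glueMap A x ∈ U'))).card := by
  set U₁ := Finset.univ.filter (fun x => Sum.inl x ∈ U') with hU₁
  set U₂ := Finset.univ.filter (fun x => glueMap A x ∈ U') with hU₂
  have key : ∀ (g : V → V ⊕ {x : V // x ∉ A}) (W : Finset V), (∀ x, x ∈ W ↔ g x ∈ U') →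
      Finset.filter (fun e => e ⊆ U') (F.edges.image (Finset.image g)) =
        (edgesIn F W).image (Finset.image g) := by
    intro g W hW
    ext e
    simp only [Finset.mem_filter, Finset.mem_image, edgesIn]
    constructor
    · rintro ⟨⟨f, hf, rfl⟩, hsub⟩
      exact ⟨f, ⟨hf, fun x hx => (hW x).2 (hsub (Finset.mem_image_of_mem g hx))⟩, rfl⟩
    · rintro ⟨f, ⟨hf, hfW⟩, rfl⟩
      refine ⟨⟨f, hf, rfl⟩, ?_⟩
      intro y hy
      obtain ⟨x, hx, rfl⟩ := Finset.mem_image.1 hy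
      exact (hW x).1 (hfW hx)
  have h1 : edgesIn (glue F A) U' =
      (edgesIn F U₁).image (Finset.image Sum.inl) ∪
        (edgesIn F U₂).image (Finset.image (glueMap A)) := by
    show Finset.filter _ _ = _
    rw [show (glue F A).edges = F.edges.image (Finset.image Sum.inl) ∪
          F.edges.image (Finset.image (glueMap A)) from rfl, Finset.filter_union,
        key Sum.inl U₁ (fun x => by simp [hU₁]),
        key (glueMap A) U₂ (fun x => by simp [hU₂])]
  have hdisj : Disjoint ((edgesIn F U₁).image (Finset.image Sum.inl))
      ((edgesIn F U₂).image (Finset.image (glueMap A))) := by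
    rw [Finset.disjoint_left]
    rintro e he1 he2
    obtain ⟨f, hf, rfl⟩ := Finset.mem_image.1 he1
    obtain ⟨g, hg, hge⟩ := Finset.mem_image.1 he2
    have hgE : g ∈ F.edges := (Finset.mem_filter.1 hg).1
    obtain ⟨x, hxg, hxA⟩ := Finset.not_subset.1 (hI g hgE)
    have hx : glueMap A x ∈ Finset.image Sum.inl f := by
      rw [← hge]; exact Finset.mem_image_of_mem _ hxg
    obtain ⟨y, _, hy⟩ := Finset.mem_image.1 hx
    rw [glueMap, dif_neg hxA] at hy
    exact Sum.inl_ne_inr hy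
  rw [h1, Finset.card_union_of_disjoint hdisj,
      Finset.card_image_of_injective _ (Finset.image_injective Sum.inl_injective),
      Finset.card_image_of_injective _ (Finset.image_injective (glueMap_injective A))]

lemma glue_card (A : Finset V) (U' : Finset (V ⊕ {x : V // x ∉ A})) :
    (U'.card : ℤ) =
      ((Finset.univ.filter (fun x => Sum.inl x ∈ U')).card : ℤ) +
      ((Finset.univ.filter (fun x => glueMap A x ∈ U')).card : ℤ) -
      ((A.filter (fun a => Sum.inl a ∈ U')).card : ℤ) := by
  set U₁ := Finset.univ.filter (fun x => Sum.inl x ∈ U') with hU₁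
  set U₂ := Finset.univ.filter (fun x => glueMap A x ∈ U') with hU₂
  have hsplit : U' = U₁.image Sum.inl ∪ (U₂ \ A).image (glueMap A) := by
    ext z
    cases z with
    | inl w =>
      simp only [Finset.mem_union, Finset.mem_image, Finset.mem_sdiff]
      constructor
      · intro hz
        exact Or.inl ⟨w, by simp [hU₁, hz], rfl⟩
      · rintro (⟨x, hx, hxe⟩ | ⟨x, ⟨hx2, hxA⟩, hxe⟩)
        · obtain rfl : x = w := Sum.inl_injective hxe
          simpa [hU₁] using hx
        · rw [glueMap, dif_neg hxA] at hxe; exact absurd hxe (by simp)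
    | inr w =>
      obtain ⟨x, hxA⟩ := w
      simp only [Finset.mem_union, Finset.mem_image, Finset.mem_sdiff]
      constructor
      · intro hz
        refine Or.inr ⟨x, ⟨?_, hxA⟩, ?_⟩
        · simp only [hU₂, Finset.mem_filter, Finset.mem_univ, true_and, glueMap,
            dif_neg hxA]
          exact Finset.mem_filter.2 ⟨Finset.mem_univ _, by simpa [dif_neg hxA] using hz⟩
        · rw [glueMap, dif_neg hxA]
      · rintro (⟨y, hy, hye⟩ | ⟨y, ⟨hy2, hyA⟩, hye⟩)
        · exact absurd hye (by simp)
        · rw [glueMap, dif_neg hyA] at hye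
          obtain rfl : y = x := congrArg (Sum.elim id Subtype.val) hye
          simpa [glueMap, dif_neg hyA] using (Finset.mem_filter.1 hy2).2
  have hdisj : Disjoint (U₁.image Sum.inl) ((U₂ \ A).image (glueMap A)) := by
    rw [Finset.disjoint_left]
    rintro z hz1 hz2
    obtain ⟨x, _, rfl⟩ := Finset.mem_image.1 hz1
    obtain ⟨y, hy, hye⟩ := Finset.mem_image.1 hz2
    have hyA : y ∉ A := (Finset.mem_sdiff.1 hy).2
    rw [glueMap, dif_neg hyA] at hye
    exact Sum.inr_ne_inl hye
  have hcard : U'.card = U₁.card + (U₂ \ A).card := by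
    rw [hsplit, Finset.card_union_of_disjoint hdisj,
        Finset.card_image_of_injective _ Sum.inl_injective,
        Finset.card_image_of_injective _ (glueMap_injective A)]
  have hAf : U₂ ∩ A = A.filter (fun a => Sum.inl a ∈ U') := by
    ext a
    simp only [Finset.mem_inter, Finset.mem_filter, hU₂, Finset.mem_univ, true_and]
    constructor
    · rintro ⟨h2, hA⟩
      rw [glueMap, dif_pos hA] at h2
      exact ⟨hA, h2⟩
    · rintro ⟨hA, h1⟩
      exact ⟨by rw [glueMap, dif_pos hA]; exact h1, hA⟩
  have h2 : (U₂ ∩ A).card + (U₂ \ A).card = U₂.card := Finset.card_inter_add_card_sdiff U₂ A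
  rw [hAf] at h2
  have h2' : ((A.filter (fun a => Sum.inl a ∈ U')).card : ℤ) + ((U₂ \ A).card : ℤ)
      = (U₂.card : ℤ) := by exact_mod_cast h2
  have hcard' : (U'.card : ℤ) = (U₁.card : ℤ) + ((U₂ \ A).card : ℤ) := by exact_mod_cast hcard
  linarith

end Aux

/-- in the gluing `F'` of two copies of an eligible `F` along the good set `A`,
for any `U' ⊆ V(F')` with `|U'| ≥ 2`, writing `U⁽¹⁾` and `U⁽²⁾` for the traces of `U'` on the
two copies, one has `Δ(U') = Δ(U⁽¹⁾) + Δ(U⁽²⁾) - |A ∩ U'|`, and consequently `Δ(U') ≥ 2`. -/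
theorem glue_defic_formula (F : Hypergraph3 V) (A B : Finset V) (u v : V) (k : ℕ)
    (h : EligibleWith F A B u v k)
    (U' : Finset (V ⊕ {x : V // x ∉ A})) (hU' : 2 ≤ U'.card) :
    defic (glue F A) U' =
      defic F (Finset.univ.filter (fun x => Sum.inl x ∈ U')) +
      defic F (Finset.univ.filter (fun x => glueMap A x ∈ U')) -
      ((A.filter (fun a => Sum.inl a ∈ U')).card : ℤ) ∧
    2 ≤ defic (glue F A) U' := by
  obtain ⟨-, -, hGA, -, -, -, -, -, -, -, -, -, -, hΔ2⟩ := h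
  have hI : Indep F A := hGA.1
  set U₁ := Finset.univ.filter (fun x => Sum.inl x ∈ U') with hU₁
  set U₂ := Finset.univ.filter (fun x => glueMap A x ∈ U') with hU₂
  have hE := glue_edgesIn_card F hI U'
  have hC := glue_card A U'
  rw [← hU₁, ← hU₂] at hE hC
  have hE' : ((edgesIn (glue F A) U').card : ℤ) =
      ((edgesIn F U₁).card : ℤ) + ((edgesIn F U₂).card : ℤ) := by exact_mod_cast hE
  have hform : defic (glue F A) U' = defic F U₁ + defic F U₂ -
      ((A.filter (fun a => Sum.inl a ∈ U')).card : ℤ) := by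
    simp only [defic]; linarith
  refine ⟨hform, ?_⟩
  -- intersections with A
  have hA1 : A ∩ U₁ = A.filter (fun a => Sum.inl a ∈ U') := by
    ext a; simp [hU₁, Finset.mem_inter, Finset.mem_filter]
  have hA2 : A ∩ U₂ = A.filter (fun a => Sum.inl a ∈ U') := by
    ext a
    simp only [Finset.mem_inter, Finset.mem_filter, hU₂, Finset.mem_univ, true_and]
    constructor
    · rintro ⟨hA, h2⟩
      rw [glueMap, dif_pos hA] at h2
      exact ⟨hA, h2⟩
    · rintro ⟨hA, h1⟩
      exact ⟨hA, by rw [glueMap, dif_pos hA]; exact h1⟩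
  set a : ℤ := ((A.filter (fun a => Sum.inl a ∈ U')).card : ℤ) with ha
  have hU'2 : (2 : ℤ) ≤ (U'.card : ℤ) := by exact_mod_cast hU'
  rw [hform]
  by_cases h1 : U₁ ⊆ A
  · -- Δ(U₁) = |U₁| = a, and |U'| = |U₂|, so Δ(U₂) ≥ 2
    have he1 : edgesIn F U₁ = ∅ := edgesIn_empty_of_indep F hI h1
    have hd1 : defic F U₁ = (U₁.card : ℤ) := by simp [defic, he1]
    have haU : A ∩ U₁ = U₁ := Finset.inter_eq_right.2 h1
    have haa : a = (U₁.card : ℤ) := by rw [ha, ← hA1, haU]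
    have hcard2 : (2 : ℤ) ≤ (U₂.card : ℤ) := by linarith
    have hd2 : 2 ≤ defic F U₂ := hΔ2 U₂ (by exact_mod_cast hcard2)
    linarith
  · by_cases h2 : U₂ ⊆ A
    · have he2 : edgesIn F U₂ = ∅ := edgesIn_empty_of_indep F hI h2
      have hd2 : defic F U₂ = (U₂.card : ℤ) := by simp [defic, he2]
      have haU : A ∩ U₂ = U₂ := Finset.inter_eq_right.2 h2
      have haa : a = (U₂.card : ℤ) := by rw [ha, ← hA2, haU]
      have hcard1 : (2 : ℤ) ≤ (U₁.card : ℤ) := by linarith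
      have hd1 : 2 ≤ defic F U₁ := hΔ2 U₁ (by exact_mod_cast hcard1)
      linarith
    · have hb1 := good_bound F hGA h1
      have hb2 := good_bound F hGA h2
      rw [hA1] at hb1
      rw [hA2] at hb2
      have hapos : 0 ≤ a := Int.ofNat_nonneg _
      linarith
end

section
/- Let F be an eligible 3-uniform hypergraph and let e ≥ 2·e(F). If a 3-uniform hypergraph H contains an (r, F)-sunflower (for some r) with at least e edges, then H contains a set of at most e + Δ(F) vertices spanning at least e edges. -/
variable {V : Type*} [DecidableEq V]

variable [Fintype V]

lemma master_ineq {E k m p h q0 D t s σ : ℤ}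
    (hk : 1 ≤ k) (hm : 1 ≤ m) (hp : 0 ≤ p) (hh : 0 ≤ h) (hσ : 0 ≤ σ) (hq0 : 0 ≤ q0)
    (hmeq : m = p + h + σ) (hhub : 4 * h ≤ E - 4 * k) (hD : 3 * E + 8 * k ≤ 4 * D)
    (hq : D - m ≤ q0) (ht2 : 2 ≤ t) (htm : E + m ≤ t * m)
    (hs : s ≤ m - 1) (hs2 : t = 2 → s ≤ 0) :
    s ≤ t * p + q0 + (t - 1) * σ := by
  have htp : 0 ≤ t * p := mul_nonneg (by linarith) hp
  have htσ : 0 ≤ (t - 1) * σ := mul_nonneg (by linarith) hσ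
  rcases le_or_gt s 0 with h0 | h0
  · linarith
  have ht3 : 3 ≤ t := by
    rcases lt_or_ge t 3 with h' | h'
    · have ht2' : t = 2 := by omega
      have := hs2 ht2'; omega
    · exact h'
  rcases le_or_gt m (2 * (p + σ)) with hc | hc
  · nlinarith [mul_nonneg (by linarith : (0:ℤ) ≤ t - 3) hp,
      mul_nonneg (by linarith : (0:ℤ) ≤ t - 3) hσ]
  · have hE4 : 4 * k + 4 * h ≤ E := by linarith
    have ha1 : p + σ ≤ h - 1 := by linarith
    have key : m * (2 * m - 1 - D) ≤ E * (p + σ) := by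
      nlinarith [mul_le_mul_of_nonneg_left hhub (by linarith : (0:ℤ) ≤ m),
        mul_le_mul_of_nonneg_left hhub (by linarith : (0:ℤ) ≤ p + σ),
        mul_le_mul_of_nonneg_left hD (by linarith : (0:ℤ) ≤ m),
        mul_le_mul_of_nonneg_left ha1 (by linarith : (0:ℤ) ≤ p + σ),
        mul_nonneg (by linarith : (0:ℤ) ≤ m) (by linarith : (0:ℤ) ≤ k),
        mul_nonneg (by linarith : (0:ℤ) ≤ p + σ) (by linarith : (0:ℤ) ≤ k),
        mul_nonneg (by linarith : (0:ℤ) ≤ m) (by linarith : (0:ℤ) ≤ E)]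
    have key2 : 2 * m - 1 - D ≤ (t - 1) * (p + σ) := by
      have hmul : m * (2 * m - 1 - D) ≤ m * ((t - 1) * (p + σ)) := by
        calc m * (2*m - 1 - D) ≤ E * (p + σ) := key
        _ ≤ ((t-1) * m) * (p + σ) :=
            mul_le_mul_of_nonneg_right (by linarith) (by linarith)
        _ = m * ((t-1) * (p+σ)) := by ring
      exact le_of_mul_le_mul_left hmul (by linarith)
    nlinarith [key2]

/-- if `F` is eligible, `e ≥ 2e(F)`, and the 3-uniform hypergraph `H` contains
an `(r, F)`-sunflower (for some `r`) with at least `e` edges, then `H` contains a set of at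
most `e + Δ(F)` vertices spanning at least `e` edges. -/
theorem sunflower_to_configuration {W : Type*} [DecidableEq W] [Fintype W]
    (F : Hypergraph3 V) (H : Hypergraph3 W) (e : ℕ)
    (heF : Eligible F) (he : 2 * F.edges.card ≤ e)
    (hsun : ∃ (r : ℕ) (U : Finset V) (φ : Fin r → V → W),
      U ⊂ Finset.univ ∧ defic F Finset.univ ≤ defic F U ∧
      (∀ i, Function.Injective (φ i)) ∧
      (∀ i, ∀ ed ∈ F.edges, ed.image (φ i) ∈ H.edges) ∧
      (∀ i j : Fin r, i ≠ j → ∀ x y : V, φ i x = φ j y ↔ (x = y ∧ x ∈ U)) ∧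
      (e : ℤ) ≤ ((Finset.univ.biUnion
        (fun i : Fin r => F.edges.image (Finset.image (φ i)))).card : ℤ)) :
    ∃ S : Finset W, (S.card : ℤ) ≤ (e : ℤ) + defic F Finset.univ ∧
      e ≤ (edgesIn H S).card := by
  classical
  obtain ⟨A, B, u, v, k, hk1, hdef, hGA, hGB, hAB, hcA, hcB, huv, huAB, hvAB,
    hhubQ, hedge1, hdeg1, hU2⟩ := heF
  obtain ⟨r, U, φ, hUss, hΔ, hinj, hmap, hglue, hbig⟩ := hsun
  rcases Nat.eq_zero_or_pos e with he0 | he1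
  · refine ⟨∅, ?_, ?_⟩
    · rw [hdef, he0]
      simp only [Finset.card_empty, Nat.cast_zero, zero_add]
      exact_mod_cast Nat.zero_le k
    · rw [he0]; exact Nat.zero_le _
  have hEne : F.edges.Nonempty := by
    rw [Finset.nonempty_iff_ne_empty]
    intro hFE
    rw [hFE] at hbig
    have hz : (Finset.univ.biUnion fun _ : Fin r => (∅ : Finset (Finset W))) = ∅ := by
      ext x; simp
    simp only [Finset.image_empty, hz, Finset.card_empty, Nat.cast_zero] at hbig
    omega
  have hr1 : 1 ≤ r := by
    rcases Nat.eq_zero_or_pos r with h0 | h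
    · subst h0
      simp at hbig
      omega
    · exact h
  classical
  -- glue lemmas
  have G : ∀ {i j : Fin r} {x y : V}, φ i x = φ j y → (i = j ∧ x = y) ∨ (x = y ∧ x ∈ U) := by
    intro i j x y hxy
    by_cases hij : i = j
    · subst hij; exact Or.inl ⟨rfl, hinj i hxy⟩
    · exact Or.inr ((hglue i j hij x y).mp hxy)
  have Geq : ∀ (i j : Fin r) (x : V), x ∈ U → φ i x = φ j x := by
    intro i j x hx
    by_cases hij : i = j
    · rw [hij]
    · exact (hglue i j hij x x).mpr ⟨rfl, hx⟩
  have GimgU : ∀ (i j : Fin r) (c : Finset V), c ⊆ U → c.image (φ i) = c.image (φ j) :=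
    fun i j c hc => Finset.image_congr (fun x hx => Geq i j x (hc hx))
  set In := edgesIn F U with hIn
  set Out := F.edges \ In with hOutdef
  have hInsub : In ⊆ F.edges := Finset.filter_subset _ _
  have hEeq : In.card + Out.card = F.edges.card := by
    rw [hOutdef, Finset.card_sdiff_of_subset hInsub]
    have := Finset.card_le_card hInsub
    omega
  have hdegpos : ∀ x : V, ∃ ed ∈ F.edges, x ∈ ed := by
    intro x
    have h := hdeg1 x
    have hne : (F.edges.filter (fun ed => x ∈ ed)).Nonempty := Finset.card_pos.mp h
    obtain ⟨ed, hed⟩ := hne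
    exact ⟨ed, (Finset.mem_filter.mp hed).1, (Finset.mem_filter.mp hed).2⟩
  have hOutne : Out.Nonempty := by
    obtain ⟨x, _, hxU⟩ := Finset.exists_of_ssubset hUss
    obtain ⟨ed, hed, hxed⟩ := hdegpos x
    refine ⟨ed, Finset.mem_sdiff.mpr ⟨hed, fun hIn' => hxU ((Finset.mem_filter.mp hIn').2 hxed)⟩⟩
  have hm1 : 1 ≤ Out.card := Finset.card_pos.mpr hOutne
  -- biUnion over all petals bound
  have i0' : Fin r := ⟨0, hr1⟩
  have hbigle : (Finset.univ.biUnion (fun i : Fin r => F.edges.image (Finset.image (φ i)))).card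
      ≤ In.card + r * Out.card := by
    have hsub : Finset.univ.biUnion (fun i : Fin r => F.edges.image (Finset.image (φ i))) ⊆
        (In.image (Finset.image (φ i0'))) ∪
          Finset.univ.biUnion (fun i : Fin r => Out.image (Finset.image (φ i))) := by
      intro ed hed
      obtain ⟨i, -, hmem⟩ := Finset.mem_biUnion.mp hed
      obtain ⟨c, hc, rfl⟩ := Finset.mem_image.mp hmem
      by_cases hcU : c ∈ In
      · refine Finset.mem_union_left _ (Finset.mem_image.mpr ⟨c, hcU, ?_⟩)
        exact (GimgU i i0' c (Finset.mem_filter.mp hcU).2).symm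
      · refine Finset.mem_union_right _ (Finset.mem_biUnion.mpr ⟨i, Finset.mem_univ i,
          Finset.mem_image.mpr ⟨c, Finset.mem_sdiff.mpr ⟨hc, hcU⟩, rfl⟩⟩)
    refine le_trans (Finset.card_le_card hsub) ?_
    refine le_trans (Finset.card_union_le _ _) ?_
    have h1 : (In.image (Finset.image (φ i0'))).card ≤ In.card := Finset.card_image_le
    have h2 : (Finset.univ.biUnion (fun i : Fin r => Out.image (Finset.image (φ i)))).card
        ≤ ∑ i : Fin r, (Out.image (Finset.image (φ i))).card := Finset.card_biUnion_le
    have h3 : ∑ i : Fin r, (Out.image (Finset.image (φ i))).card ≤ ∑ _i : Fin r, Out.card :=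
      Finset.sum_le_sum (fun i _ => Finset.card_image_le)
    have h4 : ∑ _i : Fin r, Out.card = r * Out.card := by
      rw [Finset.sum_const, Finset.card_univ, Fintype.card_fin, smul_eq_mul]
    omega
  -- choose t
  have hPr : e ≤ In.card + r * Out.card := by
    have : e ≤ (Finset.univ.biUnion (fun i : Fin r => F.edges.image (Finset.image (φ i)))).card := by
      exact_mod_cast hbig
    omega
  have hex : ∃ t, e ≤ In.card + t * Out.card := ⟨r, hPr⟩
  set t := Nat.find hex with htdef
  have htP : e ≤ In.card + t * Out.card := Nat.find_spec hex
  have htr : t ≤ r := Nat.find_min' hex hPr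
  have htmin : ∀ t' : ℕ, t' < t → ¬ (e ≤ In.card + t' * Out.card) :=
    fun t' h => Nat.find_min hex h
  clear_value t
  have ht2 : 2 ≤ t := by
    by_contra hcon
    push_neg at hcon
    have h1 : t * Out.card ≤ Out.card := by
      have : t ≤ 1 := by omega
      calc t * Out.card ≤ 1 * Out.card := Nat.mul_le_mul_right _ this
      _ = Out.card := one_mul _
    have h2 : e ≤ F.edges.card := by omega
    have h3 : 1 ≤ F.edges.card := by
      by_contra hE0
      push_neg at hE0
      omega
    omega
  have hslt : In.card + (t-1) * Out.card < e := by
    have := htmin (t-1) (by omega)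
    omega
  have hs20 : t = 2 → In.card + t * Out.card ≤ e := by
    intro ht2e
    rw [ht2e]
    have : 2 * (In.card + Out.card) ≤ e := by rw [hEeq]; exact he
    omega
  -- choose T
  have htcardr : t ≤ (Finset.univ : Finset (Fin r)).card := by
    rw [Finset.card_univ, Fintype.card_fin]; exact htr
  obtain ⟨T, hTsub, hTcard⟩ := Finset.exists_subset_card_eq htcardr
  have hTne : T.Nonempty := Finset.card_pos.mp (by omega)
  obtain ⟨i₀, hi₀⟩ := hTne
  -- vertex sets
  set Uc := (Finset.univ : Finset V) \ U with hUcdef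
  set Pset := Uc.filter (fun x => deg F x = 1) with hPdef
  set Hout := Uc.filter (fun x => ¬ deg F x = 1) with hHoutdef
  set Dset := (Finset.univ : Finset V).filter (fun x => deg F x = 1) with hDdef
  set Hubs := (Finset.univ : Finset V).filter (fun x => 1 < deg F x) with hHubsdef
  set Q0 := Dset.filter (fun x => ∀ ed ∈ F.edges, x ∈ ed → ed ⊆ U) with hQ0def
  have hPH : Pset.card + Hout.card = Uc.card := Finset.card_filter_add_card_filter_not _
  have hHoutsub : Hout ⊆ Hubs := by
    intro x hx
    have hx' := Finset.mem_filter.mp hx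
    refine Finset.mem_filter.mpr ⟨Finset.mem_univ x, ?_⟩
    have := hdeg1 x
    omega
  have hDH : Dset.card + Hubs.card = Fintype.card V := by
    have h1 : ((Finset.univ : Finset V).filter (fun x => ¬ deg F x = 1)) = Hubs := by
      rw [hHubsdef]
      apply Finset.filter_congr
      intro x _
      have := hdeg1 x
      constructor
      · intro h'; omega
      · intro h'; omega
    have := Finset.card_filter_add_card_filter_not
      (s := (Finset.univ : Finset V)) (p := fun x => deg F x = 1)
    rw [h1] at this
    rw [← Finset.card_univ]
    exact this
  have hQ0D : Q0 ⊆ Dset := Finset.filter_subset _ _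
  have hQ0U : ∀ x ∈ Q0, x ∈ U := by
    intro x hx
    obtain ⟨hxD, hxall⟩ := Finset.mem_filter.mp hx
    obtain ⟨ed, hed, hxed⟩ := hdegpos x
    exact hxall ed hed hxed hxed
  have huniq : ∀ {x : V} {b c : Finset V}, deg F x = 1 → b ∈ F.edges → c ∈ F.edges →
      x ∈ b → x ∈ c → b = c := by
    intro x b c hx hb hc hxb hxc
    have h1 : (F.edges.filter (fun ed => x ∈ ed)).card ≤ 1 := le_of_eq hx
    exact Finset.card_le_one.mp h1 b (Finset.mem_filter.mpr ⟨hb, hxb⟩) c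
      (Finset.mem_filter.mpr ⟨hc, hxc⟩)
  -- q0 ≥ D - m
  have hq0m : Dset.card ≤ Out.card + Q0.card := by
    have hex2 : ∀ x : V, ∃ ed : Finset V, x ∈ Dset \ Q0 → ed ∈ Out ∧ x ∈ ed := by
      intro x
      by_cases hx : x ∈ Dset \ Q0
      · obtain ⟨hxD, hxnQ⟩ := Finset.mem_sdiff.mp hx
        have hnall : ¬ (∀ ed ∈ F.edges, x ∈ ed → ed ⊆ U) :=
          fun hall => hxnQ (Finset.mem_filter.mpr ⟨hxD, hall⟩)
        push_neg at hnall
        obtain ⟨ed, hed, hxed, hnsub⟩ := hnall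
        exact ⟨ed, fun _ => ⟨Finset.mem_sdiff.mpr ⟨hed,
          fun hInm => hnsub (Finset.mem_filter.mp hInm).2⟩, hxed⟩⟩
      · exact ⟨∅, fun h => absurd h hx⟩
    choose f hf using hex2
    have hcard : (Dset \ Q0).card ≤ Out.card := by
      apply Finset.card_le_card_of_injOn f
      · intro x hx
        exact (hf x hx).1
      · intro x hx y hy hxy
        simp only [Finset.mem_coe] at hx hy
        have hxd : deg F x = 1 := (Finset.mem_filter.mp (Finset.mem_sdiff.mp hx).1).2
        have hyd : deg F y = 1 := (Finset.mem_filter.mp (Finset.mem_sdiff.mp hy).1).2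
        have hxe := (hf x hx).2
        have hye := (hf y hy).2
        rw [hxy] at hxe
        have hedF : f y ∈ F.edges := (Finset.mem_sdiff.mp (hf y hy).1).1
        have := hedge1 _ hedF
        exact Finset.card_le_one.mp this x (Finset.mem_filter.mpr ⟨hxe, hxd⟩) y
          (Finset.mem_filter.mpr ⟨hye, hyd⟩)
    have hcd : (Dset \ Q0).card = Dset.card - Q0.card := Finset.card_sdiff_of_subset hQ0D
    have hQD : Q0.card ≤ Dset.card := Finset.card_le_card hQ0D
    omega
  -- integer facts
  set σZ : ℤ := defic F U - k with hσdef
  have hσ0 : 0 ≤ σZ := by rw [hσdef, ← hdef]; linarith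
  have hUcardZ : (U.card : ℤ) = (In.card : ℤ) + k + σZ := by
    have : defic F U = (U.card : ℤ) - (In.card : ℤ) := rfl
    rw [hσdef, this]; ring
  have hVZ : ((Fintype.card V : ℕ) : ℤ) = (F.edges.card : ℤ) + k := by
    have h1 : edgesIn F Finset.univ = F.edges :=
      Finset.filter_true_of_mem (fun ed _ => Finset.subset_univ ed)
    have h2 : defic F Finset.univ
        = ((Finset.univ : Finset V).card : ℤ) - ((edgesIn F Finset.univ).card : ℤ) := rfl
    rw [h1, Finset.card_univ] at h2
    rw [h2] at hdef
    linarith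
  have hUcZ : (Uc.card : ℤ) = (Out.card : ℤ) - σZ := by
    have h1 : Uc.card = Fintype.card V - U.card := by
      rw [hUcdef, Finset.card_sdiff_of_subset (Finset.subset_univ U), Finset.card_univ]
    have h2 : U.card ≤ Fintype.card V := by
      rw [← Finset.card_univ]; exact Finset.card_le_card (Finset.subset_univ U)
    have h3 : (Uc.card : ℤ) = ((Fintype.card V : ℕ) : ℤ) - (U.card : ℤ) := by
      rw [h1]; push_cast [Nat.cast_sub h2]; ring
    rw [h3, hVZ, hUcardZ]
    have : ((In.card : ℤ) + Out.card) = (F.edges.card : ℤ) := by exact_mod_cast congrArg Nat.cast hEeq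
    linarith
  have hmeqZ : (Out.card : ℤ) = (Pset.card : ℤ) + (Hout.card : ℤ) + σZ := by
    have : ((Pset.card : ℤ) + Hout.card) = (Uc.card : ℤ) := by exact_mod_cast congrArg Nat.cast hPH
    linarith [hUcZ]
  have hHubZ : 4 * (Hubs.card : ℤ) ≤ (F.edges.card : ℤ) - 4 * k := by
    have hq4 : (4 : ℚ) * (Hubs.card : ℚ) ≤ (F.edges.card : ℚ) - 4 * k := by
      rw [hHubsdef]
      linarith [hhubQ]
    exact_mod_cast hq4
  have hDZ : 3 * (F.edges.card : ℤ) + 8 * (k : ℤ) ≤ 4 * (Dset.card : ℤ) := by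
    have h1 : (Dset.card : ℤ) + (Hubs.card : ℤ) = ((Fintype.card V : ℕ) : ℤ) := by
      exact_mod_cast congrArg Nat.cast hDH
    rw [hVZ] at h1
    linarith [hHubZ]
  have htmZ : (F.edges.card : ℤ) + (Out.card : ℤ) ≤ (t : ℤ) * (Out.card : ℤ) := by
    have hN : F.edges.card + Out.card ≤ t * Out.card := by omega
    exact_mod_cast hN
  have hsZ : (In.card : ℤ) + t * Out.card - e ≤ (Out.card : ℤ) - 1 := by
    have h1 : ((In.card : ℤ) + ((t:ℤ) - 1) * Out.card) < e := by
      have := hslt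
      have hc : (((t-1 : ℕ)) : ℤ) = (t : ℤ) - 1 := by
        have : 1 ≤ t := by omega
        push_cast [Nat.cast_sub this]; ring
      calc (In.card : ℤ) + ((t:ℤ) - 1) * Out.card
          = ((In.card + (t-1) * Out.card : ℕ) : ℤ) := by push_cast [hc]; ring
        _ < e := by exact_mod_cast hslt
    linarith [h1]
  have hs2Z : (t : ℤ) = 2 → (In.card : ℤ) + t * Out.card - e ≤ 0 := by
    intro h2
    have ht2n : t = 2 := by exact_mod_cast h2
    have := hs20 ht2n
    have : ((In.card + t * Out.card : ℕ) : ℤ) ≤ e := by exact_mod_cast this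
    push_cast at this
    linarith
  have hq0mZ : (Dset.card : ℤ) - Out.card ≤ Q0.card := by
    have : ((Dset.card : ℕ) : ℤ) ≤ ((Out.card + Q0.card : ℕ) : ℤ) := by exact_mod_cast hq0m
    push_cast at this; linarith
  have hmaster : (In.card : ℤ) + t * Out.card - e
      ≤ (t : ℤ) * Pset.card + Q0.card + ((t:ℤ) - 1) * σZ := by
    have c1 : (1:ℤ) ≤ (k:ℤ) := by exact_mod_cast hk1
    have c2 : (1:ℤ) ≤ (Out.card:ℤ) := by exact_mod_cast hm1
    have c3 : (0:ℤ) ≤ (Pset.card:ℤ) := Int.natCast_nonneg _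
    have c4 : (0:ℤ) ≤ (Hout.card:ℤ) := Int.natCast_nonneg _
    have c5 : (0:ℤ) ≤ (Q0.card:ℤ) := Int.natCast_nonneg _
    have c6 : (2:ℤ) ≤ (t:ℤ) := by exact_mod_cast ht2
    have c7 : 4 * (Hout.card : ℤ) ≤ (F.edges.card : ℤ) - 4 * k := by
      have : (Hout.card : ℤ) ≤ (Hubs.card : ℤ) := by
        exact_mod_cast Finset.card_le_card hHoutsub
      linarith [hHubZ]
    exact master_ineq c1 c2 c3 c4 hσ0 c5 hmeqZ c7 hDZ hq0mZ c6 htmZ hsZ hs2Z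
  -- construction
  set SunE := T.biUnion (fun i => F.edges.image (Finset.image (φ i))) with hSunEdef
  set RV := (T.biUnion (fun i => Pset.image (φ i))) ∪ Q0.image (φ i₀) with hRVdef
  have hPnotU : ∀ x ∈ Pset, x ∉ U := by
    intro x hx
    exact (Finset.mem_sdiff.mp (Finset.mem_filter.mp hx).1).2
  have hPdeg : ∀ x ∈ Pset, deg F x = 1 := fun x hx => (Finset.mem_filter.mp hx).2
  have hQdeg : ∀ x ∈ Q0, deg F x = 1 := fun x hx =>
    (Finset.mem_filter.mp (hQ0D hx)).2
  have hQall : ∀ x ∈ Q0, ∀ ed ∈ F.edges, x ∈ ed → ed ⊆ U := fun x hx =>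
    (Finset.mem_filter.mp hx).2
  have hPdis : ∀ i ∈ T, ∀ j ∈ T, i ≠ j → Disjoint (Pset.image (φ i)) (Pset.image (φ j)) := by
    intro i _ j _ hij
    rw [Finset.disjoint_left]
    rintro z hzi hzj
    obtain ⟨a, ha, rfl⟩ := Finset.mem_image.mp hzi
    obtain ⟨b, hb, hba⟩ := Finset.mem_image.mp hzj
    rcases G hba with ⟨hji, hba'⟩ | ⟨hba', hbU⟩
    · exact hij hji.symm
    · exact hPnotU b hb hbU
  have hbiP : (T.biUnion (fun i => Pset.image (φ i))).card = t * Pset.card := by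
    rw [Finset.card_biUnion hPdis]
    have : ∀ i ∈ T, (Pset.image (φ i)).card = Pset.card :=
      fun i _ => Finset.card_image_of_injective _ (hinj i)
    rw [Finset.sum_congr rfl this, Finset.sum_const, hTcard, smul_eq_mul]
  have hdisRV : Disjoint (T.biUnion (fun i => Pset.image (φ i))) (Q0.image (φ i₀)) := by
    rw [Finset.disjoint_left]
    rintro z hz1 hz2
    obtain ⟨i, _, hzi⟩ := Finset.mem_biUnion.mp hz1
    obtain ⟨a, ha, rfl⟩ := Finset.mem_image.mp hzi
    obtain ⟨b, hb, hba⟩ := Finset.mem_image.mp hz2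
    rcases G hba with ⟨_, hba'⟩ | ⟨hba', hbU⟩
    · exact hPnotU a ha (hba' ▸ hQ0U b hb)
    · exact hPnotU a ha (hba' ▸ hQ0U b hb)
  have hRVcard : RV.card = t * Pset.card + Q0.card := by
    rw [hRVdef, Finset.card_union_of_disjoint hdisRV, hbiP,
      Finset.card_image_of_injective _ (hinj i₀)]
  -- X
  set nN := min (In.card + t * Out.card - e) (t * Pset.card + Q0.card) with hnNdef
  have hnle : nN ≤ RV.card := by rw [hRVcard]; exact min_le_right _ _
  obtain ⟨X, hXsub, hXcard⟩ := Finset.exists_subset_card_eq hnle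
  -- S0 and S
  set S0 := T.biUnion (fun i => (Finset.univ : Finset V).image (φ i)) with hS0def
  have hRVS0 : RV ⊆ S0 := by
    rw [hRVdef]
    apply Finset.union_subset
    · intro z hz
      obtain ⟨i, hi, hzi⟩ := Finset.mem_biUnion.mp hz
      obtain ⟨a, _, rfl⟩ := Finset.mem_image.mp hzi
      exact Finset.mem_biUnion.mpr ⟨i, hi, Finset.mem_image_of_mem _ (Finset.mem_univ a)⟩
    · intro z hz
      obtain ⟨b, _, rfl⟩ := Finset.mem_image.mp hz
      exact Finset.mem_biUnion.mpr ⟨i₀, hi₀, Finset.mem_image_of_mem _ (Finset.mem_univ b)⟩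
  have hXS0 : X ⊆ S0 := hXsub.trans hRVS0
  set S := S0 \ X with hSdef
  have hScard : S.card = S0.card - nN := by rw [hSdef, Finset.card_sdiff_of_subset hXS0, hXcard]
  have hS0card : S0.card ≤ U.card + t * Uc.card := by
    have hsub : S0 ⊆ (U.image (φ i₀)) ∪ T.biUnion (fun i => Uc.image (φ i)) := by
      intro z hz
      obtain ⟨i, hi, hzi⟩ := Finset.mem_biUnion.mp hz
      obtain ⟨a, _, rfl⟩ := Finset.mem_image.mp hzi
      by_cases haU : a ∈ U
      · exact Finset.mem_union_left _ (Finset.mem_image.mpr ⟨a, haU, Geq i₀ i a haU⟩)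
      · refine Finset.mem_union_right _ (Finset.mem_biUnion.mpr ⟨i, hi,
          Finset.mem_image.mpr ⟨a, Finset.mem_sdiff.mpr ⟨Finset.mem_univ a, haU⟩, rfl⟩⟩)
    refine le_trans (Finset.card_le_card hsub) ?_
    refine le_trans (Finset.card_union_le _ _) ?_
    have h1 : (U.image (φ i₀)).card ≤ U.card := Finset.card_image_le
    have h2 : (T.biUnion (fun i => Uc.image (φ i))).card ≤ ∑ i ∈ T, (Uc.image (φ i)).card :=
      Finset.card_biUnion_le
    have h3 : ∑ i ∈ T, (Uc.image (φ i)).card ≤ ∑ _i ∈ T, Uc.card :=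
      Finset.sum_le_sum (fun i _ => Finset.card_image_le)
    have h4 : ∑ _i ∈ T, Uc.card = t * Uc.card := by
      rw [Finset.sum_const, hTcard, smul_eq_mul]
    omega
  -- vertex-count bound
  have hnNS0 : nN ≤ S0.card := hXcard ▸ Finset.card_le_card hXS0
  have hnXZ : (In.card:ℤ) + t * Out.card - e - ((t:ℤ)-1) * σZ ≤ (nN : ℤ) := by
    have hσt : (0:ℤ) ≤ ((t:ℤ)-1) * σZ := by
      apply mul_nonneg _ hσ0
      have : (2:ℤ) ≤ (t:ℤ) := by exact_mod_cast ht2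
      linarith
    have hsNZ : ((In.card + t * Out.card - e : ℕ) : ℤ) = (In.card:ℤ) + t * Out.card - e := by
      push_cast [Nat.cast_sub htP]
      ring
    rcases min_cases (In.card + t * Out.card - e) (t * Pset.card + Q0.card) with
      ⟨hmin, _⟩ | ⟨hmin, _⟩
    · rw [hnNdef, hmin, hsNZ]; linarith
    · rw [hnNdef, hmin]
      push_cast
      linarith [hmaster]
  have hfinal1 : (S.card : ℤ) ≤ (e : ℤ) + k := by
    have hc1 : (S.card:ℤ) = (S0.card : ℤ) - nN := by
      rw [hScard]; push_cast [Nat.cast_sub hnNS0]; ring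
    have hc2 : (S0.card:ℤ) ≤ (U.card : ℤ) + t * Uc.card := by exact_mod_cast hS0card
    have hc3 : (t:ℤ) * (Uc.card:ℤ) = (t:ℤ) * Out.card - (t:ℤ) * σZ := by
      rw [hUcZ]; ring
    have hexp : ((t:ℤ)-1) * σZ = (t:ℤ) * σZ - σZ := by ring
    rw [hc1]
    rw [hc3] at hc2
    linarith [hnXZ, hUcardZ, hc2]
  -- edge-count bound
  have hKey : ∀ x ∈ RV, ∀ ed₁ ∈ SunE, ∀ ed₂ ∈ SunE, x ∈ ed₁ → x ∈ ed₂ → ed₁ = ed₂ := by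
    intro x hx ed₁ h1 ed₂ h2 hx1 hx2
    obtain ⟨i1, hi1, hm1'⟩ := Finset.mem_biUnion.mp h1
    obtain ⟨c1, hc1, rfl⟩ := Finset.mem_image.mp hm1'
    obtain ⟨i2, hi2, hm2'⟩ := Finset.mem_biUnion.mp h2
    obtain ⟨c2, hc2, rfl⟩ := Finset.mem_image.mp hm2'
    rcases Finset.mem_union.mp hx with hxP | hxQ
    · obtain ⟨i, hi, hxi⟩ := Finset.mem_biUnion.mp hxP
      obtain ⟨a, haP, rfl⟩ := Finset.mem_image.mp hxi
      have haU : a ∉ U := hPnotU a haP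
      have haD : deg F a = 1 := hPdeg a haP
      have e1 : i1 = i ∧ a ∈ c1 := by
        obtain ⟨y, hy, hyeq⟩ := Finset.mem_image.mp hx1
        rcases G hyeq with ⟨hij, hxy⟩ | ⟨hxy, hyU⟩
        · exact ⟨hij, hxy ▸ hy⟩
        · exact absurd (hxy ▸ hyU) haU
      have e2 : i2 = i ∧ a ∈ c2 := by
        obtain ⟨y, hy, hyeq⟩ := Finset.mem_image.mp hx2
        rcases G hyeq with ⟨hij, hxy⟩ | ⟨hxy, hyU⟩
        · exact ⟨hij, hxy ▸ hy⟩
        · exact absurd (hxy ▸ hyU) haU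
      have hcc : c1 = c2 := huniq haD hc1 hc2 e1.2 e2.2
      rw [hcc, e1.1, e2.1]
    · obtain ⟨b, hbQ, rfl⟩ := Finset.mem_image.mp hxQ
      have hbD : deg F b = 1 := hQdeg b hbQ
      have e1 : b ∈ c1 := by
        obtain ⟨y, hy, hyeq⟩ := Finset.mem_image.mp hx1
        rcases G hyeq with ⟨_, hxy⟩ | ⟨hxy, _⟩
        · exact hxy ▸ hy
        · exact hxy ▸ hy
      have e2 : b ∈ c2 := by
        obtain ⟨y, hy, hyeq⟩ := Finset.mem_image.mp hx2
        rcases G hyeq with ⟨_, hxy⟩ | ⟨hxy, _⟩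
        · exact hxy ▸ hy
        · exact hxy ▸ hy
      have hcc : c1 = c2 := huniq hbD hc1 hc2 e1 e2
      subst hcc
      exact GimgU i1 i2 c1 (hQall b hbQ c1 hc1 e1)
  -- SunE lower bound
  have hAcard : (In.image (Finset.image (φ i₀))).card = In.card :=
    Finset.card_image_of_injective _ (Finset.image_injective (hinj i₀))
  have hBdis : ∀ i ∈ T, ∀ j ∈ T, i ≠ j →
      Disjoint (Out.image (Finset.image (φ i))) (Out.image (Finset.image (φ j))) := by
    intro i _ j _ hij
    rw [Finset.disjoint_left]
    rintro ed hedi hedj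
    obtain ⟨c, hc, rfl⟩ := Finset.mem_image.mp hedi
    obtain ⟨c', hc', heq⟩ := Finset.mem_image.mp hedj
    have hcU : c ⊆ U := by
      intro x hxc
      have : φ i x ∈ Finset.image (φ j) c' := heq ▸ Finset.mem_image_of_mem _ hxc
      obtain ⟨y, _, hy⟩ := Finset.mem_image.mp this
      rcases G hy with ⟨hji, _⟩ | ⟨hyx, hyU⟩
      · exact absurd hji.symm hij
      · exact hyx ▸ hyU
    exact (Finset.mem_sdiff.mp hc).2 (Finset.mem_filter.mpr ⟨(Finset.mem_sdiff.mp hc).1, hcU⟩)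
  have hABdis : Disjoint (In.image (Finset.image (φ i₀)))
      (T.biUnion (fun i => Out.image (Finset.image (φ i)))) := by
    rw [Finset.disjoint_left]
    rintro ed hedA hedB
    obtain ⟨c, hc, rfl⟩ := Finset.mem_image.mp hedA
    obtain ⟨i, _, hedi⟩ := Finset.mem_biUnion.mp hedB
    obtain ⟨c', hc', heq⟩ := Finset.mem_image.mp hedi
    by_cases hii : i = i₀
    · subst hii
      have : c' = c := Finset.image_injective (hinj i) heq
      exact (Finset.mem_sdiff.mp hc').2 (this ▸ hc)
    · have hcU : c' ⊆ U := by
        intro x hxc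
        have : φ i x ∈ Finset.image (φ i₀) c := heq ▸ Finset.mem_image_of_mem _ hxc
        obtain ⟨y, _, hy⟩ := Finset.mem_image.mp this
        rcases G hy with ⟨hji, _⟩ | ⟨hyx, hyU⟩
        · exact absurd hji.symm hii
        · exact hyx ▸ hyU
      exact (Finset.mem_sdiff.mp hc').2
        (Finset.mem_filter.mpr ⟨(Finset.mem_sdiff.mp hc').1, hcU⟩)
  have hSunsub : (In.image (Finset.image (φ i₀))) ∪
      (T.biUnion (fun i => Out.image (Finset.image (φ i)))) ⊆ SunE := by
    apply Finset.union_subset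
    · intro ed hed
      obtain ⟨c, hc, rfl⟩ := Finset.mem_image.mp hed
      exact Finset.mem_biUnion.mpr ⟨i₀, hi₀, Finset.mem_image_of_mem _ (hInsub hc)⟩
    · intro ed hed
      obtain ⟨i, hi, hedi⟩ := Finset.mem_biUnion.mp hed
      obtain ⟨c, hc, rfl⟩ := Finset.mem_image.mp hedi
      exact Finset.mem_biUnion.mpr ⟨i, hi,
        Finset.mem_image_of_mem _ ((Finset.mem_sdiff.mp hc).1)⟩
  have hSunCard : In.card + t * Out.card ≤ SunE.card := by
    have h1 : ((In.image (Finset.image (φ i₀))) ∪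
        (T.biUnion (fun i => Out.image (Finset.image (φ i))))).card
        = In.card + t * Out.card := by
      rw [Finset.card_union_of_disjoint hABdis, hAcard, Finset.card_biUnion hBdis]
      have : ∀ i ∈ T, (Out.image (Finset.image (φ i))).card = Out.card :=
        fun i _ => Finset.card_image_of_injective _ (Finset.image_injective (hinj i))
      rw [Finset.sum_congr rfl this, Finset.sum_const, hTcard, smul_eq_mul]
    rw [← h1]
    exact Finset.card_le_card hSunsub
  -- Hit and Kept
  set Kept := SunE.filter (fun ed => Disjoint ed X) with hKeptdef
  set Hit := SunE.filter (fun ed => ¬ Disjoint ed X) with hHitdef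
  have hHitsub : Hit ⊆ X.biUnion (fun x => SunE.filter (fun ed => x ∈ ed)) := by
    intro ed hed
    obtain ⟨heS, hnd⟩ := Finset.mem_filter.mp hed
    obtain ⟨a, ha_ed, haX⟩ := Finset.not_disjoint_iff.mp hnd
    exact Finset.mem_biUnion.mpr ⟨a, haX, Finset.mem_filter.mpr ⟨heS, ha_ed⟩⟩
  have hHitle : Hit.card ≤ nN := by
    calc Hit.card ≤ (X.biUnion (fun x => SunE.filter (fun ed => x ∈ ed))).card :=
        Finset.card_le_card hHitsub
      _ ≤ ∑ x ∈ X, (SunE.filter (fun ed => x ∈ ed)).card := Finset.card_biUnion_le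
      _ ≤ ∑ _x ∈ X, 1 := by
          apply Finset.sum_le_sum
          intro x hxX
          apply Finset.card_le_one.mpr
          intro e1 he1 e2 he2
          obtain ⟨he1S, he1x⟩ := Finset.mem_filter.mp he1
          obtain ⟨he2S, he2x⟩ := Finset.mem_filter.mp he2
          exact hKey x (hXsub hxX) e1 he1S e2 he2S he1x he2x
      _ = nN := by rw [Finset.sum_const, hXcard, smul_eq_mul, mul_one]
  have hsplit : Kept.card + Hit.card = SunE.card :=
    Finset.card_filter_add_card_filter_not _
  have hKeptB : e ≤ Kept.card := by
    have h1 : nN ≤ In.card + t * Out.card - e := min_le_left _ _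
    omega
  have hKeptsub : Kept ⊆ edgesIn H S := by
    intro ed hed
    obtain ⟨heS, hdisj⟩ := Finset.mem_filter.mp hed
    obtain ⟨i, hi, hedi⟩ := Finset.mem_biUnion.mp heS
    obtain ⟨c, hc, rfl⟩ := Finset.mem_image.mp hedi
    refine Finset.mem_filter.mpr ⟨hmap i c hc, ?_⟩
    intro w hw
    obtain ⟨x, _, rfl⟩ := Finset.mem_image.mp hw
    refine Finset.mem_sdiff.mpr ⟨Finset.mem_biUnion.mpr ⟨i, hi,
      Finset.mem_image_of_mem _ (Finset.mem_univ x)⟩, ?_⟩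
    exact Finset.disjoint_left.mp hdisj hw
  have hfinal2 : e ≤ (edgesIn H S).card :=
    le_trans hKeptB (Finset.card_le_card hKeptsub)
  refine ⟨S, ?_, hfinal2⟩
  rw [hdef]
  exact hfinal1
end

section
/- Let G be a properly edge-colored complete bipartite graph K_{s,t'} with t' > (s(s−1)+1)(t−1). Then G contains a rainbow copy of K_{s,t}, i.e., a copy of K_{s,t} in which all st edges receive distinct colors. -/
/-- Keevash–Mubayi–Sudakov–Verstraëte: a properly edge-colored `K_{s,t'}` with
`t' > (s(s-1)+1)(t-1)` contains a rainbow copy of `K_{s,t}`. Here `c i j` is the color of the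
edge between left vertex `i` and right vertex `j`; properness says edges sharing a vertex get
distinct colors, and a rainbow copy is given by an injective choice `g` of `t` right vertices
such that all `st` colors `c i (g j)` are pairwise distinct. -/
theorem rainbow_Kst {C : Type*} (s t t' : ℕ) (ht' : (s * (s - 1) + 1) * (t - 1) < t')
    (c : Fin s → Fin t' → C)
    (hproper₁ : ∀ i : Fin s, Function.Injective (c i))
    (hproper₂ : ∀ j : Fin t', Function.Injective (fun i : Fin s => c i j)) :
    ∃ g : Fin t → Fin t', Function.Injective g ∧
      Function.Injective (fun p : Fin s × Fin t => c p.1 (g p.2)) := by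
  classical
  suffices h : ∀ k : ℕ, k ≤ t → ∃ g : Fin k → Fin t', Function.Injective g ∧
      Function.Injective (fun p : Fin s × Fin k => c p.1 (g p.2)) from h t le_rfl
  intro k
  induction k with
  | zero => exact fun _ => ⟨Fin.elim0, fun a => a.elim0, fun p => p.2.elim0⟩
  | succ k ih =>
    intro hk
    obtain ⟨g, hg, hcg⟩ := ih (Nat.le_of_succ_le hk)
    have hk' : k ≤ t - 1 := by omega
    set B : Finset (Fin t') := Finset.univ.filter
      (fun j => (∃ j', g j' = j) ∨
        ∃ i i' : Fin s, ∃ j' : Fin k, i ≠ i' ∧ c i j = c i' (g j')) with hBdef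
    have hBsub : B ⊆ (Finset.univ.image g) ∪
        ((Finset.univ : Finset (Fin s)).offDiag ×ˢ (Finset.univ : Finset (Fin k))).biUnion
          (fun q => Finset.univ.filter (fun j => c q.1.1 j = c q.1.2 (g q.2))) := by
      intro j hj
      simp only [hBdef, Finset.mem_filter, Finset.mem_univ, true_and] at hj
      rcases hj with ⟨j', rfl⟩ | ⟨i, i', j', hne, heq⟩
      · exact Finset.mem_union_left _ (Finset.mem_image_of_mem g (Finset.mem_univ _))
      · refine Finset.mem_union_right _ (Finset.mem_biUnion.mpr ⟨((i, i'), j'), ?_, ?_⟩)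
        · simp [Finset.mem_offDiag, hne]
        · simp [heq]
    have hBcard : B.card ≤ (s * (s - 1) + 1) * (t - 1) := by
      have h1 : (Finset.univ.image g).card ≤ k :=
        le_trans Finset.card_image_le (by simp)
      have h2 : (((Finset.univ : Finset (Fin s)).offDiag ×ˢ
          (Finset.univ : Finset (Fin k))).biUnion
          (fun q => Finset.univ.filter (fun j => c q.1.1 j = c q.1.2 (g q.2)))).card ≤
          (s * s - s) * k * 1 := by
        refine le_trans (Finset.card_biUnion_le_card_mul _ _ 1 ?_) ?_
        · intro q _
          refine Finset.card_le_one.mpr ?_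
          intro a ha b hb
          simp only [Finset.mem_filter] at ha hb
          exact hproper₁ q.1.1 (ha.2.trans hb.2.symm)
        · apply Nat.mul_le_mul_right
          rw [Finset.card_product, Finset.offDiag_card]
          simp
      have hss : s * s - s = s * (s - 1) := by
        cases s with
        | zero => simp
        | succ n => simp [Nat.succ_mul, Nat.mul_succ]
      have := le_trans (Finset.card_le_card hBsub)
        (le_trans (Finset.card_union_le _ _) (Nat.add_le_add h1 h2))
      rw [hss] at this
      calc B.card ≤ k + s * (s - 1) * k * 1 := this
        _ = (s * (s - 1) + 1) * k := by ring
        _ ≤ (s * (s - 1) + 1) * (t - 1) := Nat.mul_le_mul_left _ hk'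
    have hex : ∃ j : Fin t', j ∉ B := by
      by_contra h
      push_neg at h
      have : (Finset.univ : Finset (Fin t')).card ≤ B.card :=
        Finset.card_le_card (fun j _ => h j)
      rw [Finset.card_univ, Fintype.card_fin] at this
      omega
    obtain ⟨j, hj⟩ := hex
    simp only [hBdef, Finset.mem_filter, Finset.mem_univ, true_and, not_or, not_exists] at hj
    obtain ⟨hj1, hj2⟩ := hj
    have hj1' : ∀ j', g j' ≠ j := fun j' => hj1 j'
    have hj2' : ∀ i i' : Fin s, ∀ j' : Fin k, i ≠ i' → c i j ≠ c i' (g j') := by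
      intro i i' j' hne heq
      exact (hj2 i i' j') ⟨hne, heq⟩
    refine ⟨Fin.snoc g j, ?_, ?_⟩
    · intro a b hab
      induction a using Fin.lastCases with
      | last =>
        induction b using Fin.lastCases with
        | last => rfl
        | cast b =>
          rw [Fin.snoc_last, Fin.snoc_castSucc] at hab
          exact absurd hab.symm (hj1' b)
      | cast a =>
        induction b using Fin.lastCases with
        | last =>
          rw [Fin.snoc_last, Fin.snoc_castSucc] at hab
          exact absurd hab (hj1' a)
        | cast b =>
          rw [Fin.snoc_castSucc, Fin.snoc_castSucc] at hab
          exact congrArg Fin.castSucc (hg hab)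
    · intro p q hpq
      obtain ⟨i, x⟩ := p
      obtain ⟨i', y⟩ := q
      simp only at hpq
      induction x using Fin.lastCases with
      | last =>
        induction y using Fin.lastCases with
        | last =>
          rw [Fin.snoc_last] at hpq
          exact Prod.ext (hproper₂ j hpq) rfl
        | cast y =>
          rw [Fin.snoc_last, Fin.snoc_castSucc] at hpq
          by_cases hii : i = i'
          · subst hii
            exact absurd (hproper₁ i hpq) (hj1' y).symm
          · exact absurd hpq (hj2' i i' y hii)
      | cast x =>
        induction y using Fin.lastCases with
        | last =>
          rw [Fin.snoc_last, Fin.snoc_castSucc] at hpq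
          by_cases hii : i' = i
          · subst hii
            exact absurd (hproper₁ i' hpq.symm) (hj1' x).symm
          · exact absurd hpq.symm (hj2' i' i x hii)
        | cast y =>
          rw [Fin.snoc_castSucc, Fin.snoc_castSucc] at hpq
          have := hcg (a₁ := (i, x)) (a₂ := (i', y)) hpq
          have h1 := congrArg Prod.fst this
          have h2 := congrArg Prod.snd this
          simp only at h1 h2
          exact Prod.ext h1 (congrArg Fin.castSucc h2)
end
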